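/- arXiv:2305.02672 — 3 statements merged into one kernel-verified Lean document; each statement's English description precedes it below -/
import Mathlib

section
/- Let φ = (1+√5)/2. For every integer i ≥ 1: L_{2i} = φ^{2i} + φ^{−2i}; and for every integer i ≥ 0: L_{2i+1} = Σ_{k=0}^{i} φ^{2k} + Σ_{k=1}^{i} φ^{−2k}. In each case the set of exponents appearing contains no two consecutive integers, so these identities exhibit the canonical φ-representation of the corresponding Lucas number. -/
/-- The golden ratio φ = (1+√5)/2. -/
noncomputable def phi : ℝ := (1 + Real.sqrt 5) / 2

/-- Lucas numbers: defined by L₀ = 2, L₁ = 1, L_{n+2} = L_{n+1} + L_n. -/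
def lucas : ℕ → ℕ
  | 0 => 2
  | 1 => 1
  | n + 2 => lucas (n + 1) + lucas n

noncomputable def psi : ℝ := (1 - Real.sqrt 5) / 2

lemma sqrt5_sq : Real.sqrt 5 * Real.sqrt 5 = 5 :=
  Real.mul_self_sqrt (by norm_num)

lemma phi_mul_psi : phi * psi = -1 := by
  unfold phi psi; have := sqrt5_sq; ring_nf; nlinarith [sqrt5_sq]

lemma phi_add_psi : phi + psi = 1 := by unfold phi psi; ring

lemma phi_ne_zero : phi ≠ 0 := by
  unfold phi
  have : Real.sqrt 5 ≥ 0 := Real.sqrt_nonneg 5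
  positivity

lemma phi_inv : phi⁻¹ = -psi := by
  field_simp [phi_ne_zero]
  linarith [phi_mul_psi]

lemma lucas_real (n : ℕ) : (lucas n : ℝ) = phi ^ n + psi ^ n := by
  have key : ∀ n : ℕ, (lucas n : ℝ) = phi ^ n + psi ^ n ∧
      (lucas (n+1) : ℝ) = phi ^ (n+1) + psi ^ (n+1) := by
    intro n
    induction n with
    | zero =>
      constructor
      · norm_num [lucas]
      · simp [lucas, pow_one]; linarith [phi_add_psi]
    | succ m ih =>
      refine ⟨ih.2, ?_⟩
      have h : lucas (m + 2) = lucas (m + 1) + lucas m := rfl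
      have hp : phi ^ (m + 2) = phi ^ (m+1) + phi ^ m := by
        have : phi ^ 2 = phi + 1 := by
          unfold phi; nlinarith [sqrt5_sq]
        calc phi ^ (m+2) = phi ^ m * phi ^ 2 := by ring
          _ = phi ^ m * (phi + 1) := by rw [this]
          _ = phi ^ (m+1) + phi ^ m := by ring
      have hq : psi ^ (m + 2) = psi ^ (m+1) + psi ^ m := by
        have : psi ^ 2 = psi + 1 := by
          unfold psi; nlinarith [sqrt5_sq]
        calc psi ^ (m+2) = psi ^ m * psi ^ 2 := by ring
          _ = psi ^ m * (psi + 1) := by rw [this]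
          _ = psi ^ (m+1) + psi ^ m := by ring
      rw [h, Nat.cast_add, ih.1, ih.2, hp, hq]; ring
  exact (key n).1

lemma even_part (i : ℕ) :
    (lucas (2 * i) : ℝ) = phi ^ (2 * (i : ℤ)) + phi ^ (-(2 * (i : ℤ))) := by
  have h1 : phi ^ (2 * (i : ℤ)) = phi ^ (2 * i) := by
    rw [show (2 * (i:ℤ)) = ((2*i : ℕ) : ℤ) by push_cast; ring, zpow_natCast]
  have h2 : phi ^ (-(2 * (i : ℤ))) = psi ^ (2 * i) := by
    rw [show (-(2 * (i:ℤ))) = -((2*i : ℕ) : ℤ) by push_cast; ring, zpow_neg,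
      zpow_natCast, ← inv_pow, phi_inv, Even.neg_pow ⟨i, by ring⟩]
  rw [h1, h2, lucas_real]

theorem lucas_canonical_phi_representation :
    (∀ i : ℕ, 1 ≤ i →
      (lucas (2 * i) : ℝ) = phi ^ (2 * (i : ℤ)) + phi ^ (-(2 * (i : ℤ)))) ∧
    (∀ i : ℕ,
      (lucas (2 * i + 1) : ℝ) =
        (∑ k ∈ Finset.range (i + 1), phi ^ (2 * (k : ℤ))) +
          ∑ k ∈ Finset.Icc 1 i, phi ^ (-(2 * (k : ℤ)))) := by
  constructor
  · intro i _; exact even_part i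
  · intro i
    induction i with
    | zero => simp [lucas]
    | succ m ih =>
      have hrec : lucas (2 * (m+1) + 1) = lucas (2 * (m+1)) + lucas (2 * m + 1) := by
        have : 2 * (m+1) + 1 = (2*m+1) + 2 := by ring
        rw [this]; rfl
      rw [hrec, Nat.cast_add, ih, even_part (m+1)]
      conv_rhs => rw [Finset.sum_range_succ, Finset.sum_Icc_succ_top (by omega : 1 ≤ m + 1)]
      push_cast
      ring
end

section
/- Let m ≥ 1 and let b_1, b_2, …, b_m ∈ {0,1} with b_m = 1. There exists a natural number n whose canonical φ-representation has fractional digits exactly b_1 ⋯ b_m — i.e., there exists n ∈ ℕ with d_{−j}(n) = b_j for 1 ≤ j ≤ m and d_{−j}(n) = 0 for all j > m — if and only if m is even and b_j·b_{j+1} = 0 for all 1 ≤ j < m. -/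
lemma phi_eq : phi = Real.goldenRatio := rfl

lemma phi_pos : 0 < phi := phi_eq ▸ Real.goldenRatio_pos
lemma one_lt_phi : 1 < phi := phi_eq ▸ Real.one_lt_goldenRatio
lemma phi_sq : phi ^ 2 = phi + 1 := phi_eq ▸ Real.goldenRatio_sq

lemma phi_sub_one : phi - 1 = phi⁻¹ := by
  have h := phi_sq
  have h0 : phi ≠ 0 := phi_ne_zero
  field_simp
  nlinarith [phi_pos]

lemma phi_zpow_succ (i : ℤ) : phi ^ (i + 1) = phi ^ i + phi ^ (i - 1) := by
  have h1 : phi ^ (i + 1) = phi ^ (i - 1) * phi ^ 2 := by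
    rw [← zpow_natCast phi 2, ← zpow_add₀ phi_ne_zero]; ring_nf
  have h2 : phi ^ i = phi ^ (i - 1) * phi := by
    rw [← zpow_add_one₀ phi_ne_zero]; ring_nf
  rw [h1, h2, phi_sq]; ring

lemma abs_goldConj : |Real.goldenConj| = phi⁻¹ := by
  rw [abs_of_neg Real.goldenConj_neg, phi_eq, Real.inv_goldenRatio]

/-- Geometric bound: a finite set of non-adjacent integers all `≤ M` has φ-power sum `< φ^(M+1)`. -/
lemma sum_phi_zpow_lt (S : Finset ℤ) (hS : ∀ i ∈ S, i + 1 ∉ S) (M : ℤ)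
    (hM : ∀ i ∈ S, i ≤ M) : ∑ i ∈ S, phi ^ i < phi ^ (M + 1) := by
  induction S using Finset.strongInduction generalizing M with
  | _ S ih =>
    rcases S.eq_empty_or_nonempty with rfl | hne
    · simpa using zpow_pos phi_pos (M + 1)
    · set t := S.max' hne with htdef
      have htS : t ∈ S := S.max'_mem hne
      have htM : t ≤ M := hM t htS
      have hsub : S.erase t ⊂ S := Finset.erase_ssubset htS
      have hbound : ∀ i ∈ S.erase t, i ≤ t - 2 := by
        intro i hi
        have hiS := Finset.mem_of_mem_erase hi
        have hne' : i ≠ t := Finset.ne_of_mem_erase hi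
        have hle : i ≤ t := S.le_max' i hiS
        have : i ≠ t - 1 := by
          rintro rfl
          exact hS _ hiS (by simpa using htS)
        omega
      have hrec := ih (S.erase t) hsub (fun i hi hi2 => hS i (Finset.mem_of_mem_erase hi) (Finset.mem_of_mem_erase hi2))
        (t - 2) hbound
      have hsum : ∑ i ∈ S, phi ^ i = phi ^ t + ∑ i ∈ S.erase t, phi ^ i :=
        (Finset.add_sum_erase S _ htS).symm
      have h1 : (t - 2) + 1 = t - 1 := by ring
      rw [h1] at hrec
      have h2 : phi ^ t + phi ^ (t - 1) = phi ^ (t + 1) := (phi_zpow_succ t).symm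
      have h3 : phi ^ (t+1) ≤ phi ^ (M + 1) := zpow_le_zpow_right₀ (le_of_lt one_lt_phi) (by omega)
      rw [hsum]; linarith

/-- Fibonacci numbers with integer index. -/
def fibz : ℤ → ℤ
  | .ofNat n => Nat.fib n
  | .negSucc n => (-1) ^ n * Nat.fib (n + 1)

lemma fibz_ofNat (n : ℕ) : fibz n = Nat.fib n := rfl
@[simp] lemma fibz_zero : fibz 0 = 0 := rfl
@[simp] lemma fibz_neg_one : fibz (-1) = 1 := by decide

lemma fibz_neg_nat (j : ℕ) (hj : 1 ≤ j) : fibz (-(j : ℤ)) = (-1) ^ (j + 1) * Nat.fib j := by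
  obtain ⟨k, rfl⟩ := Nat.exists_eq_add_of_le hj
  have h : -((1 + k : ℕ) : ℤ) = Int.negSucc k := by
    rw [Int.negSucc_eq]; push_cast; ring
  rw [h]
  show ((-1:ℤ)) ^ k * (Nat.fib (k+1) : ℤ) = (-1) ^ (1 + k + 1) * Nat.fib (1 + k)
  rw [Nat.add_comm 1 k]
  have h2 : ((-1:ℤ)) ^ (k + 1 + 1) = (-1) ^ k := by rw [pow_succ, pow_succ]; ring
  rw [h2]

lemma fibz_add_two (i : ℤ) : fibz (i + 2) = fibz (i + 1) + fibz i := by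
  match i with
  | .ofNat n =>
    show fibz ((n : ℤ) + 2) = fibz ((n : ℤ) + 1) + fibz n
    have h2 : ((n : ℤ) + 2) = ((n + 2 : ℕ) : ℤ) := by push_cast; ring
    have h1 : ((n : ℤ) + 1) = ((n + 1 : ℕ) : ℤ) := by push_cast; ring
    rw [h1, h2, fibz_ofNat, fibz_ofNat, fibz_ofNat, Nat.fib_add_two]
    push_cast; ring
  | .negSucc 0 => decide
  | .negSucc 1 => decide
  | .negSucc (n + 2) =>
    have e0 : Int.negSucc (n + 2) + 2 = Int.negSucc n := by
      simp [Int.negSucc_eq]; ring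
    have e1 : Int.negSucc (n + 2) + 1 = Int.negSucc (n + 1) := by
      simp [Int.negSucc_eq]; ring
    rw [e0, e1]
    show (-1:ℤ) ^ n * Nat.fib (n + 1) = (-1) ^ (n+1) * Nat.fib (n + 2) + (-1) ^ (n+2) * Nat.fib (n + 3)
    have : (Nat.fib (n+3) : ℤ) = Nat.fib (n+2) + Nat.fib (n+1) := by
      rw [show n + 3 = (n+1) + 2 by ring, Nat.fib_add_two]; push_cast; ring
    rw [this]; ring

/-- For any root of x² = x + 1, integer powers are given by integer Fibonacci numbers. -/
lemma zpow_eq_fibz (x : ℝ) (hx : x ^ 2 = x + 1) (hx0 : x ≠ 0) (i : ℤ) :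
    x ^ i = fibz i * x + fibz (i - 1) := by
  induction i using Int.induction_on with
  | zero => norm_num
  | succ n ih =>
    have h1 : x ^ ((n : ℤ) + 1) = x ^ (n : ℤ) * x := by
      rw [zpow_add_one₀ hx0]
    have hrec : fibz ((n : ℤ) + 1) = fibz n + fibz ((n : ℤ) - 1) := by
      have := fibz_add_two ((n : ℤ) - 1)
      have e1 : (n : ℤ) - 1 + 2 = (n : ℤ) + 1 := by ring
      have e2 : (n : ℤ) - 1 + 1 = (n : ℤ) := by ring
      rw [e1, e2] at this; linarith [this]
    rw [h1, ih, hrec]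
    push_cast
    have e3 : ((n : ℤ) + 1 - 1) = (n : ℤ) := by ring
    rw [e3]
    linear_combination (fibz (n:ℤ) : ℝ) * hx
  | pred n ih =>
    have h1 : x ^ (-(n : ℤ) - 1) = x ^ (-(n : ℤ)) * x⁻¹ := by
      rw [← zpow_sub_one₀ hx0]
    have hinv : x⁻¹ = x - 1 := by
      field_simp; nlinarith [hx]
    have hrec : fibz (-(n : ℤ) - 2) = fibz (-(n:ℤ)) - fibz (-(n : ℤ) - 1) := by
      have := fibz_add_two (-(n : ℤ) - 2)
      have e1 : -(n : ℤ) - 2 + 2 = -(n : ℤ) := by ring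
      have e2 : -(n : ℤ) - 2 + 1 = -(n : ℤ) - 1 := by ring
      rw [e1, e2] at this; linarith
    rw [h1, ih, hinv]
    have e4 : (-(n:ℤ) - 1 - 1) = -(n:ℤ) - 2 := by ring
    rw [e4, hrec]
    push_cast
    linear_combination (fibz (-(n:ℤ)) : ℝ) * hx

/-- `a` is a finite φ-representation of the real number `x`: a finitely supported
function `a : ℤ → {0,1}` with `x = Σ_{i ∈ ℤ} a(i) · φ^i`. -/
def IsPhiRep (x : ℝ) (a : ℤ →₀ ℕ) : Prop :=
  (∀ i, a i ≤ 1) ∧ x = ∑ i ∈ a.support, (a i : ℝ) * phi ^ i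

/-- `a` is the canonical φ-representation of `x`: a finite φ-representation with
no two adjacent digits equal to 1. -/
def IsCanonRep (x : ℝ) (a : ℤ →₀ ℕ) : Prop :=
  IsPhiRep x a ∧ ∀ i : ℤ, a i * a (i + 1) = 0

lemma abs_sum_goldConj_zpow_lt (S : Finset ℤ) (hS : ∀ i ∈ S, i + 1 ∉ S) (k : ℤ)
    (hk : ∀ i ∈ S, k ≤ i) : |∑ i ∈ S, Real.goldenConj ^ i| < phi ^ (1 - k) := by
  have habs : ∀ i : ℤ, |Real.goldenConj ^ i| = phi ^ (-i) := by
    intro i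
    rw [show |Real.goldenConj ^ i| = |Real.goldenConj| ^ i from map_zpow₀ absHom Real.goldenConj i,
      abs_goldConj, inv_zpow, ← zpow_neg]
  have h1 : |∑ i ∈ S, Real.goldenConj ^ i| ≤ ∑ i ∈ S, phi ^ (-i) :=
    (Finset.abs_sum_le_sum_abs _ _).trans
      (le_of_eq (Finset.sum_congr rfl fun i _ => habs i))
  have h2 : ∑ i ∈ S, phi ^ (-i) = ∑ j ∈ S.image (fun i => -i), phi ^ j := by
    rw [Finset.sum_image (by intro a _ b _ h; have h' : -a = -b := h; omega)]
  have h3 : ∑ j ∈ S.image (fun i => -i), phi ^ j < phi ^ ((-k) + 1) := by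
    apply sum_phi_zpow_lt
    · intro j hj hj1
      simp only [Finset.mem_image] at hj hj1
      obtain ⟨a, ha, rfl⟩ := hj
      obtain ⟨c, hc, hc2⟩ := hj1
      have hca : c + 1 = a := by omega
      exact hS c hc (hca ▸ ha)
    · intro j hj
      simp only [Finset.mem_image] at hj
      obtain ⟨a, ha, rfl⟩ := hj
      exact neg_le_neg (hk a ha)
  have he : (-k) + 1 = 1 - k := by ring
  rw [he] at h3
  calc |∑ i ∈ S, Real.goldenConj ^ i| ≤ ∑ i ∈ S, phi ^ (-i) := h1
    _ = _ := h2
    _ < _ := h3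

/-- Conjugation: if a φ-power sum over a finite set is an integer, the corresponding
ψ-power sum equals the same integer. -/
lemma conj_sum (S : Finset ℤ) (z : ℤ) (h : (z : ℝ) = ∑ i ∈ S, phi ^ i) :
    (z : ℝ) = ∑ i ∈ S, Real.goldenConj ^ i := by
  set P : ℤ := ∑ i ∈ S, fibz i with hP
  set Q : ℤ := ∑ i ∈ S, fibz (i - 1) with hQ
  have hphi : (z : ℝ) = (P : ℝ) * phi + (Q : ℝ) := by
    rw [h]
    calc ∑ i ∈ S, phi ^ i
        = ∑ i ∈ S, ((fibz i : ℝ) * phi + (fibz (i - 1) : ℝ)) :=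
          Finset.sum_congr rfl (fun i _ => zpow_eq_fibz phi phi_sq phi_ne_zero i)
      _ = (∑ i ∈ S, (fibz i : ℝ)) * phi + ∑ i ∈ S, (fibz (i - 1) : ℝ) := by
          rw [Finset.sum_add_distrib, Finset.sum_mul]
      _ = (P : ℝ) * phi + (Q : ℝ) := by rw [hP, hQ]; push_cast; ring
  have hP0 : P = 0 := by
    by_contra hPne
    have hPne' : ((P : ℤ) : ℝ) ≠ 0 := Int.cast_ne_zero.mpr hPne
    have hval : phi = ((z - Q : ℤ) : ℝ) / ((P : ℤ) : ℝ) := by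
      push_cast
      field_simp
      linarith [hphi]
    have : ¬ Irrational ((((z - Q : ℤ) : ℚ) / ((P : ℤ) : ℚ) : ℚ) : ℝ) :=
      Rat.not_irrational _
    apply this
    have hcast : ((((z - Q : ℤ) : ℚ) / ((P : ℤ) : ℚ) : ℚ) : ℝ) = phi := by
      rw [hval]; push_cast; ring
    rw [hcast, phi_eq]
    exact Real.goldenRatio_irrational
  have hpsi : ∑ i ∈ S, Real.goldenConj ^ i = (P : ℝ) * Real.goldenConj + (Q : ℝ) := by
    calc ∑ i ∈ S, Real.goldenConj ^ i
        = ∑ i ∈ S, ((fibz i : ℝ) * Real.goldenConj + (fibz (i - 1) : ℝ)) :=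
          Finset.sum_congr rfl (fun i _ => zpow_eq_fibz Real.goldenConj Real.goldenConj_sq Real.goldenConj_ne_zero i)
      _ = (∑ i ∈ S, (fibz i : ℝ)) * Real.goldenConj + ∑ i ∈ S, (fibz (i - 1) : ℝ) := by
          rw [Finset.sum_add_distrib, Finset.sum_mul]
      _ = (P : ℝ) * Real.goldenConj + (Q : ℝ) := by rw [hP, hQ]; push_cast; ring
  rw [hpsi, hP0, hphi, hP0]
  push_cast
  ring

lemma canon_sets_aux (S S' : Finset ℤ) (hS' : ∀ i ∈ S', i + 1 ∉ S')
    (h : ∑ i ∈ S, phi ^ i = ∑ i ∈ S', phi ^ i) (t : ℤ) (htS : t ∈ S) (htS' : t ∉ S')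
    (hlt : ∀ x ∈ S' \ S, x < t) : False := by
  have key : ∑ i ∈ S \ S', phi ^ i = ∑ i ∈ S' \ S, phi ^ i := by
    have e1 : ∑ i ∈ S ∩ S', phi ^ i + ∑ i ∈ S \ S', phi ^ i = ∑ i ∈ S, phi ^ i :=
      Finset.sum_inter_add_sum_sdiff S S' _
    have e2 : ∑ i ∈ S' ∩ S, phi ^ i + ∑ i ∈ S' \ S, phi ^ i = ∑ i ∈ S', phi ^ i :=
      Finset.sum_inter_add_sum_sdiff S' S _
    rw [Finset.inter_comm] at e2
    linarith
  have hlow : phi ^ t ≤ ∑ i ∈ S \ S', phi ^ i := by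
    apply Finset.single_le_sum (fun i _ => le_of_lt (zpow_pos phi_pos i))
    exact Finset.mem_sdiff.mpr ⟨htS, htS'⟩
  have hup : ∑ i ∈ S' \ S, phi ^ i < phi ^ ((t - 1) + 1) := by
    apply sum_phi_zpow_lt
    · intro i hi hi1
      have h1 := (Finset.mem_sdiff.mp hi).1
      have h2 := (Finset.mem_sdiff.mp hi1).1
      exact hS' i h1 h2
    · intro i hi
      have := hlt i hi
      omega
  have he : (t - 1) + 1 = t := by ring
  rw [he] at hup
  linarith

lemma canon_sets_eq (S S' : Finset ℤ) (hS : ∀ i ∈ S, i + 1 ∉ S) (hS' : ∀ i ∈ S', i + 1 ∉ S')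
    (h : ∑ i ∈ S, phi ^ i = ∑ i ∈ S', phi ^ i) : S = S' := by
  by_contra hne
  rcases Finset.eq_empty_or_nonempty ((S \ S') ∪ (S' \ S)) with he | hne2
  · rw [Finset.union_eq_empty] at he
    exact hne (Finset.Subset.antisymm (Finset.sdiff_eq_empty_iff_subset.mp he.1)
      (Finset.sdiff_eq_empty_iff_subset.mp he.2))
  · set t := ((S \ S') ∪ (S' \ S)).max' hne2 with htdef
    have htmem := Finset.max'_mem _ hne2
    have hmax : ∀ x ∈ (S \ S') ∪ (S' \ S), x ≤ t := fun x hx => Finset.le_max' _ x hx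
    rw [Finset.mem_union] at htmem
    rcases htmem with ht | ht
    · obtain ⟨ht1, ht2⟩ := Finset.mem_sdiff.mp ht
      refine canon_sets_aux S S' hS' h t ht1 ht2 (fun x hx => ?_)
      have hx1 := hmax x (Finset.mem_union_right _ hx)
      have : x ≠ t := by
        rintro rfl
        exact ht2 (Finset.mem_sdiff.mp hx).1
      omega
    · obtain ⟨ht1, ht2⟩ := Finset.mem_sdiff.mp ht
      refine canon_sets_aux S' S hS h.symm t ht1 ht2 (fun x hx => ?_)
      have hx1 := hmax x (Finset.mem_union_left _ hx)
      have : x ≠ t := by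
        rintro rfl
        exact ht2 (Finset.mem_sdiff.mp hx).1
      omega

lemma canon_support_nonadj {x : ℝ} {a : ℤ →₀ ℕ} (h : IsCanonRep x a) :
    ∀ i ∈ a.support, i + 1 ∉ a.support := by
  intro i hi hi1
  rw [Finsupp.mem_support_iff] at hi hi1
  have := h.2 i
  have := Nat.mul_eq_zero.mp this
  tauto

lemma canon_sum_support {x : ℝ} {a : ℤ →₀ ℕ} (h : IsCanonRep x a) :
    x = ∑ i ∈ a.support, phi ^ i := by
  rw [h.1.2]
  refine Finset.sum_congr rfl (fun i hi => ?_)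
  have h1 : a i ≠ 0 := Finsupp.mem_support_iff.mp hi
  have h2 : a i ≤ 1 := h.1.1 i
  have : a i = 1 := by omega
  rw [this]; norm_num

lemma canon_unique {x : ℝ} {a a' : ℤ →₀ ℕ} (h : IsCanonRep x a) (h' : IsCanonRep x a') :
    a = a' := by
  have hsupp : a.support = a'.support :=
    canon_sets_eq _ _ (canon_support_nonadj h) (canon_support_nonadj h')
      ((canon_sum_support h).symm.trans (canon_sum_support h'))
  ext i
  by_cases hi : i ∈ a.support
  · have hi' : i ∈ a'.support := hsupp ▸ hi
    have e1 : a i ≠ 0 := Finsupp.mem_support_iff.mp hi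
    have e2 : a' i ≠ 0 := Finsupp.mem_support_iff.mp hi'
    have e3 := h.1.1 i
    have e4 := h'.1.1 i
    omega
  · have hi' : i ∉ a'.support := hsupp ▸ hi
    rw [Finsupp.notMem_support_iff] at hi hi'
    rw [hi, hi']

lemma sum_fib_Icc (k : ℕ) : (∑ j ∈ Finset.Icc 1 k, Nat.fib j) + 1 = Nat.fib (k + 2) := by
  induction k with
  | zero => decide
  | succ k ih =>
    rw [Finset.sum_Icc_succ_top (by omega : 1 ≤ k + 1)]
    have : k + 1 + 2 = (k + 1) + 2 := rfl
    rw [Nat.fib_add_two (n := k + 1)]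
    have e : Nat.fib (k + 1 + 1) = Nat.fib (k + 2) := by norm_num
    omega

/-- Zeckendorf existence over finsets. -/
lemma zeck (t : ℕ) : ∃ S : Finset ℕ, (∀ i ∈ S, 2 ≤ i) ∧ (∀ i ∈ S, i + 1 ∉ S) ∧
    (∀ i ∈ S, Nat.fib i ≤ t) ∧ ∑ i ∈ S, Nat.fib i = t := by
  induction t using Nat.strong_induction_on with
  | _ t ih =>
    rcases Nat.eq_zero_or_pos t with rfl | ht
    · exact ⟨∅, by simp, by simp, by simp, by simp⟩
    · set g := Nat.greatestFib t with hg
      have hg2 : 2 ≤ g := Nat.le_greatestFib.mpr (by simp; omega)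
      have hfg : Nat.fib g ≤ t := Nat.fib_greatestFib_le t
      have hfgpos : 0 < Nat.fib g := Nat.fib_pos.mpr (by omega)
      set r := t - Nat.fib g with hr
      have hrt : r < t := by omega
      obtain ⟨S', h2, hadj, hbd, hsum⟩ := ih r hrt
      have hlt : ∀ i ∈ S', i + 2 ≤ g := by
        intro i hi
        have h1 : Nat.fib i ≤ r := hbd i hi
        have h3 : i ≤ Nat.greatestFib r := Nat.le_greatestFib.mpr h1
        have h4 : Nat.greatestFib r ≤ g - 2 :=
          Nat.greatestFib_sub_fib_greatestFib_le_greatestFib (by omega)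
        omega
      have hgS' : g ∉ S' := fun h => by have := hlt g h; omega
      refine ⟨insert g S', ?_, ?_, ?_, ?_⟩
      · intro i hi
        rcases Finset.mem_insert.mp hi with rfl | hi
        · exact hg2
        · exact h2 i hi
      · intro i hi
        rcases Finset.mem_insert.mp hi with rfl | hi
        · intro hmem
          rcases Finset.mem_insert.mp hmem with h | h
          · omega
          · have := hlt _ h; omega
        · intro hmem
          rcases Finset.mem_insert.mp hmem with h | h
          · have := hlt _ hi; omega
          · exact hadj i hi h
      · intro i hi
        rcases Finset.mem_insert.mp hi with rfl | hi
        · exact hfg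
        · exact le_trans (hbd i hi) (by omega)
      · rw [Finset.sum_insert hgS', hsum]
        omega

lemma goldConj_zpow_neg_nat (j : ℕ) : Real.goldenConj ^ (-(j : ℤ)) = (-1) ^ j * phi ^ j := by
  rw [zpow_neg, ← inv_zpow, Real.inv_goldenConj, zpow_natCast, neg_pow, phi_eq]

lemma phi_sub_inv : phi - phi⁻¹ = 1 := by
  have h := phi_sq
  have h0 : phi ≠ 0 := phi_ne_zero
  field_simp
  nlinarith [phi_pos]

/-- A binary word `b₁ ⋯ b_m` (with `b_m = 1`) occurs as the fractional digits of the
canonical φ-representation of some natural number iff `m` is even and the word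
contains no two adjacent 1's. Here `d n` denotes the canonical φ-representation of `n`. -/
theorem fractional_part_characterization
    (d : ℕ → ℤ →₀ ℕ) (hd : ∀ n : ℕ, IsCanonRep n (d n))
    (m : ℕ) (hm : 1 ≤ m) (b : ℕ → ℕ) (hb : ∀ j, b j ≤ 1) (hbm : b m = 1) :
    (∃ n : ℕ, (∀ j : ℕ, 1 ≤ j → j ≤ m → d n (-(j : ℤ)) = b j) ∧
        ∀ j : ℕ, m < j → d n (-(j : ℤ)) = 0) ↔
      (Even m ∧ ∀ j : ℕ, 1 ≤ j → j < m → b j * b (j + 1) = 0) := by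

  constructor
  · rintro ⟨n, h1, h2⟩
    obtain ⟨⟨hle, hsum⟩, hadj⟩ := hd n
    have hbadj : ∀ j : ℕ, 1 ≤ j → j < m → b j * b (j + 1) = 0 := by
      intro j hj1 hjm
      have h := hadj (-((j + 1 : ℕ) : ℤ))
      have e : (-((j + 1 : ℕ) : ℤ)) + 1 = -(j : ℤ) := by push_cast; ring
      rw [e] at h
      rw [h1 (j + 1) (by omega) (by omega), h1 j hj1 (le_of_lt hjm)] at h
      simpa [Nat.mul_comm] using h
    refine ⟨?_, hbadj⟩
    by_contra hodd
    have hOdd : Odd m := Nat.not_even_iff_odd.mp hodd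
    set S := (d n).support with hSdef
    have hSadj : ∀ i ∈ S, i + 1 ∉ S := canon_support_nonadj (hd n)
    have hsum' : (n : ℝ) = ∑ i ∈ S, phi ^ i := canon_sum_support (hd n)
    have hconj : (n : ℝ) = ∑ i ∈ S, Real.goldenConj ^ i := conj_sum S n hsum'
    set J := (Finset.Icc 1 m).filter (fun j => b j = 1) with hJdef
    have hmJ : m ∈ J := by
      rw [hJdef, Finset.mem_filter, Finset.mem_Icc]; exact ⟨⟨hm, le_rfl⟩, hbm⟩
    -- the negative support is the image of J
    have hSneg : S.filter (fun i => i < 0) = J.image (fun j : ℕ => -(j : ℤ)) := by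
      ext i
      simp only [Finset.mem_filter, Finset.mem_image, Finset.mem_Icc, hSdef,
        Finsupp.mem_support_iff, hJdef]
      constructor
      · rintro ⟨hiS, hineg⟩
        set j := (-i).toNat with hj
        have hij : i = -(j : ℤ) := by omega
        have hj1 : 1 ≤ j := by omega
        by_cases hjm : j ≤ m
        · refine ⟨j, ⟨⟨hj1, hjm⟩, ?_⟩, hij.symm⟩
          have hbj := h1 j hj1 hjm
          rw [hij, hbj] at hiS
          have := hb j
          omega
        · exfalso
          have := h2 j (by omega)
          rw [hij, this] at hiS
          exact hiS rfl
      · rintro ⟨j, ⟨⟨hj1, hjm⟩, hbj⟩, rfl⟩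
        constructor
        · rw [h1 j hj1 hjm, hbj]; omega
        · omega
    have hsplit := Finset.sum_filter_add_sum_filter_not S (fun i => i < 0)
      (fun i => Real.goldenConj ^ i)
    -- bound the nonnegative part
    have hA : |∑ i ∈ S.filter (fun i => ¬ i < 0), Real.goldenConj ^ i| < phi := by
      have h := abs_sum_goldConj_zpow_lt (S.filter (fun i => ¬ i < 0))
        (fun i hi hi1 => by
          have := hSadj i (Finset.mem_of_mem_filter i hi)
          exact this (Finset.mem_of_mem_filter _ hi1)) 0
        (fun i hi => by
          have := (Finset.mem_filter.mp hi).2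
          omega)
      simpa using h
    -- compute the negative part
    have hT : ∑ i ∈ S.filter (fun i => i < 0), Real.goldenConj ^ i
        = ∑ j ∈ J, (-1 : ℝ) ^ j * phi ^ j := by
      rw [hSneg, Finset.sum_image (by intro a _ c _ h; have h' : -(a : ℤ) = -(c : ℤ) := h; omega)]
      exact Finset.sum_congr rfl fun j _ => goldConj_zpow_neg_nat j
    have hTsplit : ∑ j ∈ J, (-1 : ℝ) ^ j * phi ^ j
        = (-1 : ℝ) ^ m * phi ^ m + ∑ j ∈ J.erase m, (-1 : ℝ) ^ j * phi ^ j :=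
      (Finset.add_sum_erase J _ hmJ).symm
    have hm1 : (-1 : ℝ) ^ m = -1 := Odd.neg_one_pow hOdd
    -- bound the rest of the word
    have hR1 : ∑ j ∈ J.erase m, (-1 : ℝ) ^ j * phi ^ j ≤ ∑ j ∈ J.erase m, phi ^ j := by
      refine Finset.sum_le_sum fun j _ => ?_
      rcases neg_one_pow_eq_one_iff_even (R := ℝ) (by norm_num) (n := j) |>.mpr with _
      have hp : (0:ℝ) ≤ phi ^ j := le_of_lt (pow_pos phi_pos j)
      rcases Nat.even_or_odd j with hj | hj
      · rw [Even.neg_one_pow hj]; linarith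
      · rw [Odd.neg_one_pow hj]; linarith
    have hjm2 : ∀ j ∈ J.erase m, j + 2 ≤ m := by
      intro j hj
      have hjne := Finset.ne_of_mem_erase hj
      have hjJ := Finset.mem_of_mem_erase hj
      rw [hJdef, Finset.mem_filter, Finset.mem_Icc] at hjJ
      obtain ⟨⟨hj1, hjm⟩, hbj⟩ := hjJ
      by_contra h
      have hjm1 : j = m - 1 := by omega
      have hm2 : 2 ≤ m := by omega
      have := hbadj (m - 1) (by omega) (by omega)
      rw [show m - 1 + 1 = m by omega, hbm, Nat.mul_one] at this
      rw [hjm1] at hbj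
      omega
    have hR2 : ∑ j ∈ J.erase m, (phi : ℝ) ^ j < phi ^ ((m : ℤ) - 1) := by
      have himg : ∑ j ∈ J.erase m, (phi : ℝ) ^ j
          = ∑ i ∈ (J.erase m).image ((↑) : ℕ → ℤ), phi ^ i := by
        rw [Finset.sum_image (by intro a _ c _ h; omega)]
        exact Finset.sum_congr rfl fun j _ => (zpow_natCast phi j).symm
      rw [himg]
      have h := sum_phi_zpow_lt ((J.erase m).image ((↑) : ℕ → ℤ))
        (by
          intro i hi hi1
          simp only [Finset.mem_image] at hi hi1
          obtain ⟨s, hs, rfl⟩ := hi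
          obtain ⟨s', hs', hs'2⟩ := hi1
          have : s' = s + 1 := by omega
          subst this
          have h1 := hjm2 s hs
          have h2 := hjm2 (s+1) hs'
          have hsJ := Finset.mem_of_mem_erase hs
          have hs'J := Finset.mem_of_mem_erase hs'
          rw [hJdef, Finset.mem_filter, Finset.mem_Icc] at hsJ hs'J
          have := hbadj s (hsJ.1.1) (by omega)
          rw [hsJ.2, hs'J.2] at this
          omega)
        ((m : ℤ) - 2)
        (by
          intro i hi
          simp only [Finset.mem_image] at hi
          obtain ⟨s, hs, rfl⟩ := hi
          have := hjm2 s hs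
          omega)
      have e : (m : ℤ) - 2 + 1 = (m : ℤ) - 1 := by ring
      rwa [e] at h
    -- assemble
    have hzm : (phi : ℝ) ^ m = phi ^ (m : ℤ) := (zpow_natCast phi m).symm
    have hstep : phi ^ ((m : ℤ)) = phi ^ ((m : ℤ) - 1) + phi ^ ((m : ℤ) - 2) := by
      have h := phi_zpow_succ ((m : ℤ) - 1)
      have e1 : (m : ℤ) - 1 + 1 = (m : ℤ) := by ring
      have e2 : (m : ℤ) - 1 - 1 = (m : ℤ) - 2 := by ring
      rwa [e1, e2] at h
    have hmono : phi ^ (-1 : ℤ) ≤ phi ^ ((m : ℤ) - 2) :=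
      zpow_le_zpow_right₀ (le_of_lt one_lt_phi) (by omega)
    have hinv : phi ^ (-1 : ℤ) = phi⁻¹ := zpow_neg_one phi
    have habs := abs_lt.mp hA
    -- lower bound : n ≥ 1
    have hmS : -(m : ℤ) ∈ S := by
      rw [hSdef, Finsupp.mem_support_iff, h1 m hm le_rfl, hbm]
      omega
    have hnpos : (0 : ℝ) < (n : ℝ) := by
      rw [hsum']
      have h := Finset.single_le_sum (f := fun i => phi ^ i)
        (fun i _ => le_of_lt (zpow_pos phi_pos i)) hmS
      have := zpow_pos phi_pos (-(m : ℤ))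
      linarith
    have hn1 : (1 : ℝ) ≤ (n : ℝ) := by
      have : n ≠ 0 := by
        rintro rfl
        simp at hnpos
      exact_mod_cast Nat.one_le_iff_ne_zero.mpr this
    have hfinal : (n : ℝ) < 1 := by
      rw [hconj, ← hsplit, hT, hTsplit, hm1, hzm]
      have := phi_sub_inv
      linarith
    linarith
  · rintro ⟨hEven, hAdj⟩
    have hm2 : 2 ≤ m := by
      rcases hEven with ⟨k, hk⟩; omega
    set J := (Finset.Icc 1 m).filter (fun j => b j = 1) with hJdef
    have hmJ : m ∈ J := by
      rw [hJdef, Finset.mem_filter, Finset.mem_Icc]; exact ⟨⟨hm, le_rfl⟩, hbm⟩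
    have hbm1 : b (m - 1) = 0 := by
      have h := hAdj (m - 1) (by omega) (by omega)
      rw [show m - 1 + 1 = m by omega, hbm, Nat.mul_one] at h
      exact h
    set t : ℤ := ∑ j ∈ J, (-1 : ℤ) ^ j * (Nat.fib j : ℤ) with htdef
    -- J minus its top element consists of small indices
    have hjm2 : ∀ j ∈ J.erase m, j + 2 ≤ m := by
      intro j hj
      have hjne := Finset.ne_of_mem_erase hj
      have hjJ := Finset.mem_of_mem_erase hj
      rw [hJdef, Finset.mem_filter, Finset.mem_Icc] at hjJ
      obtain ⟨⟨hj1, hjm⟩, hbj⟩ := hjJ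
      by_contra h
      have hjm1 : j = m - 1 := by omega
      rw [hjm1] at hbj
      omega
    have hsubIcc : J.erase m ⊆ Finset.Icc 1 (m - 2) := by
      intro j hj
      have h2 := hjm2 j hj
      have hjJ := Finset.mem_of_mem_erase hj
      rw [hJdef, Finset.mem_filter, Finset.mem_Icc] at hjJ
      rw [Finset.mem_Icc]
      omega
    -- t ≥ 1
    have ht1 : 1 ≤ t := by
      have hsplit : t = (-1 : ℤ) ^ m * (Nat.fib m : ℤ)
          + ∑ j ∈ J.erase m, (-1 : ℤ) ^ j * (Nat.fib j : ℤ) := by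
        rw [htdef, ← Finset.add_sum_erase J _ hmJ]
      have hm1 : (-1 : ℤ) ^ m = 1 := Even.neg_one_pow hEven
      have hterm : ∀ j ∈ J.erase m, -(Nat.fib j : ℤ) ≤ (-1 : ℤ) ^ j * (Nat.fib j : ℤ) := by
        intro j _
        have h0 : (0 : ℤ) ≤ (Nat.fib j : ℤ) := Int.natCast_nonneg _
        rcases Nat.even_or_odd j with hj | hj
        · rw [Even.neg_one_pow hj]; linarith
        · rw [Odd.neg_one_pow hj]; linarith
      have hlb : -(∑ j ∈ J.erase m, (Nat.fib j : ℤ))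
          ≤ ∑ j ∈ J.erase m, (-1 : ℤ) ^ j * (Nat.fib j : ℤ) := by
        rw [← Finset.sum_neg_distrib]
        exact Finset.sum_le_sum hterm
      have hmono : ∑ j ∈ J.erase m, (Nat.fib j : ℤ) ≤ ∑ j ∈ Finset.Icc 1 (m - 2), (Nat.fib j : ℤ) :=
        Finset.sum_le_sum_of_subset_of_nonneg hsubIcc (fun j _ _ => Int.natCast_nonneg _)
      have hfibsum : ∑ j ∈ Finset.Icc 1 (m - 2), (Nat.fib j : ℤ) = (Nat.fib m : ℤ) - 1 := by
        have h := sum_fib_Icc (m - 2)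
        rw [show m - 2 + 2 = m by omega] at h
        have : ((∑ j ∈ Finset.Icc 1 (m - 2), Nat.fib j : ℕ) : ℤ) = ((Nat.fib m : ℕ) : ℤ) - 1 := by
          omega
        rw [← this]
        push_cast
        ring
      rw [hsplit, hm1]
      have := hmono.trans (le_of_eq hfibsum)
      linarith
    -- Zeckendorf representation of t
    obtain ⟨Z, hZ2, hZadj, hZbd, hZsum⟩ := zeck t.toNat
    set T : Finset ℤ := Z.image ((↑) : ℕ → ℤ) ∪ J.image (fun j : ℕ => -(j : ℤ)) with hTdef
    have hdisj : Disjoint (Z.image ((↑) : ℕ → ℤ)) (J.image (fun j : ℕ => -(j : ℤ))) := by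
      rw [Finset.disjoint_left]
      intro i hi hi'
      simp only [Finset.mem_image] at hi hi'
      obtain ⟨s, hs, rfl⟩ := hi
      obtain ⟨j, hj, hj2⟩ := hi'
      rw [hJdef, Finset.mem_filter, Finset.mem_Icc] at hj
      omega
    have hmemZ : ∀ i : ℤ, i ∈ T ↔ ((∃ s ∈ Z, (s : ℤ) = i) ∨ ∃ j ∈ J, -(j : ℤ) = i) := by
      intro i
      simp [hTdef, Finset.mem_union, Finset.mem_image]
    have hJge1 : ∀ j ∈ J, 1 ≤ j ∧ j ≤ m ∧ b j = 1 := by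
      intro j hj
      rw [hJdef, Finset.mem_filter, Finset.mem_Icc] at hj
      exact ⟨hj.1.1, hj.1.2, hj.2⟩
    have hTadj : ∀ i ∈ T, i + 1 ∉ T := by
      intro i hi hi1
      rw [hmemZ] at hi hi1
      rcases hi with ⟨s, hs, rfl⟩ | ⟨j, hj, rfl⟩
      · rcases hi1 with ⟨s', hs', hs'2⟩ | ⟨j', hj', hj'2⟩
        · have : s' = s + 1 := by omega
          subst this
          exact hZadj s hs hs'
        · have h1 := hJge1 j' hj'
          have h2 := hZ2 s hs
          omega
      · have h1 := hJge1 j hj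
        rcases hi1 with ⟨s', hs', hs'2⟩ | ⟨j', hj', hj'2⟩
        · have h2 := hZ2 s' hs'
          omega
        · have h2 := hJge1 j' hj'
          have hjj : j = j' + 1 := by omega
          have := hAdj j' h2.1 (by omega)
          rw [h2.2.2, show j' + 1 = j by omega, h1.2.2] at this
          omega
    -- the candidate representation
    set a : ℤ →₀ ℕ := ⟨T, fun i => if i ∈ T then 1 else 0, fun i => by
      by_cases h : i ∈ T <;> simp [h]⟩ with hadef
    have haval : ∀ i, a i = if i ∈ T then 1 else 0 := fun i => rfl
    have hasupp : a.support = T := rfl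
    -- the φ-power sum over T is an integer
    have hfibzZ : ∑ i ∈ Z.image ((↑) : ℕ → ℤ), fibz i = t := by
      rw [Finset.sum_image (by intro x _ y _ h; omega)]
      have : ∑ s ∈ Z, fibz (s : ℤ) = ∑ s ∈ Z, (Nat.fib s : ℤ) :=
        Finset.sum_congr rfl fun s _ => fibz_ofNat s
      rw [this, ← Nat.cast_sum, hZsum, Int.toNat_of_nonneg (by omega)]
    have hfibzJ : ∑ i ∈ J.image (fun j : ℕ => -(j : ℤ)), fibz i = -t := by
      rw [Finset.sum_image (by intro x hx y hy h; have h' : -(x : ℤ) = -(y : ℤ) := h; omega)]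
      have h1 : ∑ j ∈ J, fibz (-(j : ℤ)) = ∑ j ∈ J, (-1 : ℤ) ^ (j + 1) * (Nat.fib j : ℤ) :=
        Finset.sum_congr rfl fun j hj => fibz_neg_nat j (hJge1 j hj).1
      rw [h1, htdef, ← Finset.sum_neg_distrib]
      refine Finset.sum_congr rfl fun j _ => ?_
      rw [pow_succ]
      ring
    have hfibzT : ∑ i ∈ T, fibz i = 0 := by
      rw [hTdef, Finset.sum_union hdisj, hfibzZ, hfibzJ]
      ring
    set Q : ℤ := ∑ i ∈ T, fibz (i - 1) with hQdef
    have hxQ : ∑ i ∈ T, phi ^ i = (Q : ℝ) := by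
      calc ∑ i ∈ T, phi ^ i
          = ∑ i ∈ T, ((fibz i : ℝ) * phi + (fibz (i - 1) : ℝ)) :=
            Finset.sum_congr rfl (fun i _ => zpow_eq_fibz phi phi_sq phi_ne_zero i)
        _ = (∑ i ∈ T, (fibz i : ℝ)) * phi + ∑ i ∈ T, (fibz (i - 1) : ℝ) := by
            rw [Finset.sum_add_distrib, Finset.sum_mul]
        _ = (Q : ℝ) := by
            rw [← Int.cast_sum, ← Int.cast_sum, hfibzT, ← hQdef]
            push_cast
            ring
    have hmT : -(m : ℤ) ∈ T := by
      rw [hmemZ]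
      exact Or.inr ⟨m, hmJ, rfl⟩
    have hxpos : (0 : ℝ) < (Q : ℝ) := by
      rw [← hxQ]
      have h := Finset.single_le_sum (f := fun i => phi ^ i)
        (fun i _ => le_of_lt (zpow_pos phi_pos i)) hmT
      have := zpow_pos phi_pos (-(m : ℤ))
      linarith
    have hQpos : 0 < Q := by exact_mod_cast hxpos
    set n : ℕ := Q.toNat with hndef
    have hnQ : (n : ℝ) = (Q : ℝ) := by
      rw [hndef]
      exact_mod_cast congrArg (Int.cast : ℤ → ℝ) (Int.toNat_of_nonneg (le_of_lt hQpos))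
    have hcanA : IsCanonRep (n : ℝ) a := by
      refine ⟨⟨fun i => by rw [haval]; split <;> omega, ?_⟩, ?_⟩
      · rw [hasupp, hnQ, ← hxQ]
        refine Finset.sum_congr rfl fun i hi => ?_
        rw [haval, if_pos hi]
        norm_num
      · intro i
        by_cases h1 : i ∈ T
        · have h2 : i + 1 ∉ T := hTadj i h1
          rw [haval, haval, if_neg h2, Nat.mul_zero]
        · rw [haval, if_neg h1, Nat.zero_mul]
    have hda : d n = a := canon_unique (hd n) hcanA
    refine ⟨n, ?_, ?_⟩
    · intro j hj1 hjm
      rw [hda, haval]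
      by_cases hbj : b j = 1
      · rw [if_pos, hbj]
        rw [hmemZ]
        refine Or.inr ⟨j, ?_, rfl⟩
        rw [hJdef, Finset.mem_filter, Finset.mem_Icc]
        exact ⟨⟨hj1, hjm⟩, hbj⟩
      · have hbj0 : b j = 0 := by have := hb j; omega
        rw [if_neg, hbj0]
        rw [hmemZ]
        rintro (⟨s, hs, hs2⟩ | ⟨j', hj', hj'2⟩)
        · have := hZ2 s hs; omega
        · have h1 := hJge1 j' hj'
          have : j' = j := by omega
          subst this
          exact hbj h1.2.2
    · intro j hjm
      rw [hda, haval, if_neg]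
      rw [hmemZ]
      rintro (⟨s, hs, hs2⟩ | ⟨j', hj', hj'2⟩)
      · have := hZ2 s hs; omega
      · have h1 := hJge1 j' hj'
        omega
end

section
/- For every natural number n, if b : ℕ → {0,1} is finitely supported with b(i)·b(i+1) = 0 for all i and n = Σ_{i≥0} b(i)·F_{i+2} (the Zeckendorf representation of n), then Σ_{i≥0} b(i) ≤ Σ_{i∈ℤ} d_i(n). In words: the digit sum of the Zeckendorf representation of n is at most the digit sum of the canonical base-φ representation of n. -/
namespace Gerd
open Real goldenRatio

lemma phi_eq : phi = goldenRatio := rfl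

local notation "g" => goldenRatio
local notation "gc" => goldenConj

lemma g_pos : (0:ℝ) < g := goldenRatio_pos
lemma g_ne : (g:ℝ) ≠ 0 := goldenRatio_ne_zero
lemma gc_ne : (gc:ℝ) ≠ 0 := goldenConj_ne_zero

lemma gzpow_pos (i : ℤ) : 0 < g ^ i := zpow_pos g_pos i

lemma gzpow_lt {a b : ℤ} (h : a < b) : g ^ a < g ^ b :=
  zpow_lt_zpow_right₀ one_lt_goldenRatio h

lemma gzpow_le {a b : ℤ} (h : a ≤ b) : g ^ a ≤ g ^ b :=
  zpow_le_zpow_right₀ one_lt_goldenRatio.le h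

lemma gz_step (k : ℤ) : g ^ (k+2) = g ^ (k+1) + g ^ k := by
  have h2 : g ^ (2:ℤ) = g + 1 := by
    rw [show (2:ℤ) = ((2:ℕ):ℤ) by norm_num, zpow_natCast]; exact goldenRatio_sq
  have : g ^ (k+2) = g ^ k * g ^ (2:ℤ) := by
    rw [← zpow_add₀ g_ne]
  rw [this, h2, show g ^ (k+1) = g ^ k * g by rw [← zpow_add_one₀ g_ne]]
  ring


-- coefficient pairs
lemma pow_pair (i : ℤ) : ∃ a b : ℤ, g ^ i = a + b * g ∧ gc ^ i = a + b * gc := by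
  induction i using Int.induction_on with
  | zero => exact ⟨1, 0, by norm_num, by norm_num⟩
  | succ k ih =>
    obtain ⟨a, b, h1, h2⟩ := ih
    refine ⟨b, a + b, ?_, ?_⟩
    · rw [zpow_add_one₀ g_ne, h1]
      push_cast
      linear_combination g * h1 - h1 * g + (b:ℝ) * goldenRatio_sq
    · rw [zpow_add_one₀ gc_ne, h2]
      push_cast
      linear_combination (b:ℝ) * goldenConj_sq
  | pred k ih =>
    obtain ⟨a, b, h1, h2⟩ := ih
    refine ⟨b - a, a, ?_, ?_⟩
    · have hg : g ^ (-(k:ℤ) - 1) * g = g ^ (-(k:ℤ)) := by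
        rw [← zpow_add_one₀ g_ne]; ring_nf
      have hG : g * (g ^ (-(k:ℤ)-1) - (((b - a : ℤ):ℝ) + (a:ℝ) * g)) = 0 := by
        push_cast
        linear_combination hg + h1 - (a:ℝ) * goldenRatio_sq
      rcases mul_eq_zero.mp hG with h | h
      · exact absurd h g_ne
      · push_cast at h ⊢; linarith
    · have hg : gc ^ (-(k:ℤ) - 1) * gc = gc ^ (-(k:ℤ)) := by
        rw [← zpow_add_one₀ gc_ne]; ring_nf
      have hG : gc * (gc ^ (-(k:ℤ)-1) - (((b - a : ℤ):ℝ) + (a:ℝ) * gc)) = 0 := by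
        push_cast
        linear_combination hg + h2 - (a:ℝ) * goldenConj_sq
      rcases mul_eq_zero.mp hG with h | h
      · exact absurd h gc_ne
      · push_cast at h ⊢; linarith

lemma int_indep {a b : ℤ} (h : (a:ℝ) + b * g = 0) : a = 0 ∧ b = 0 := by
  have h5 : Irrational (Real.sqrt 5) :=
    Nat.Prime.irrational_sqrt (show Nat.Prime 5 by norm_num)
  by_cases hb : b = 0
  · subst hb; simp at h; exact ⟨by exact_mod_cast h, rfl⟩
  · exfalso
    have hb5 : (b:ℝ) * Real.sqrt 5 = ((-2*a - b : ℤ) : ℝ) := by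
      push_cast
      simp only [goldenRatio] at h
      linear_combination 2 * h
    have : Irrational ((b:ℝ) * Real.sqrt 5) := h5.intCast_mul hb
    rw [hb5] at this
    exact (Int.not_irrational _) this


open Real goldenRatio Finset



def NA (E : Finset ℤ) : Prop := ∀ i : ℤ, i ∈ E → i + 1 ∈ E → False

noncomputable def vP (E : Finset ℤ) : ℝ := ∑ i ∈ E, g ^ i
noncomputable def vQ (E : Finset ℤ) : ℝ := ∑ i ∈ E, gc ^ i

lemma NA.mono {E E' : Finset ℤ} (hs : E' ⊆ E) (h : NA E) : NA E' :=
  fun i hi hi1 => h i (hs hi) (hs hi1)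

lemma NA.neg_image {E : Finset ℤ} (h : NA E) : NA (E.image (fun i => -i)) := by
  intro i hi hi1
  simp only [Finset.mem_image] at hi hi1
  obtain ⟨a, ha, ha'⟩ := hi
  obtain ⟨b, hb, hb'⟩ := hi1
  have hb2 : b + 1 = a := by omega
  exact h b hb (hb2 ▸ ha)

lemma vP_nonneg (E : Finset ℤ) : 0 ≤ vP E :=
  Finset.sum_nonneg fun i _ => (gzpow_pos i).le

lemma single_le_vP {E : Finset ℤ} {i : ℤ} (hi : i ∈ E) : g ^ i ≤ vP E :=
  Finset.single_le_sum (fun j _ => (gzpow_pos j).le) hi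

lemma vP_pos {E : Finset ℤ} (h : E.Nonempty) : 0 < vP E := by
  obtain ⟨i, hi⟩ := h
  exact lt_of_lt_of_le (gzpow_pos i) (single_le_vP hi)

lemma vP_erase {E : Finset ℤ} {i : ℤ} (hi : i ∈ E) :
    vP (E.erase i) = vP E - g ^ i := by
  unfold vP
  rw [← Finset.add_sum_erase _ _ hi]; ring

lemma vQ_erase {E : Finset ℤ} {i : ℤ} (hi : i ∈ E) :
    vQ (E.erase i) = vQ E - gc ^ i := by
  unfold vQ
  rw [← Finset.add_sum_erase _ _ hi]; ring

lemma pair_le_vP {E : Finset ℤ} {i j : ℤ} (hi : i ∈ E) (hj : j ∈ E) (hij : i ≠ j) :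
    g ^ i + g ^ j ≤ vP E := by
  have hj' : j ∈ E.erase i := Finset.mem_erase.mpr ⟨hij.symm, hj⟩
  have := single_le_vP hj'
  rw [vP_erase hi] at this
  linarith

lemma S1 : ∀ (E : Finset ℤ), NA E → ∀ (t : ℤ), (∀ i ∈ E, i ≤ t) → vP E < g ^ (t+1) := by
  intro E
  induction E using Finset.strongInduction with
  | _ E ih =>
    intro hNA t ht
    rcases E.eq_empty_or_nonempty with rfl | hne
    · simpa [vP] using gzpow_pos (t+1)
    · set M := E.max' hne with hM
      have hMem : M ∈ E := E.max'_mem hne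
      have hMt : M ≤ t := ht M hMem
      have hsub : E.erase M ⊂ E := Finset.erase_ssubset hMem
      have hbound : ∀ i ∈ E.erase M, i ≤ M - 2 := by
        intro i hi
        have hiE : i ∈ E := Finset.mem_of_mem_erase hi
        have hiM : i ≠ M := Finset.ne_of_mem_erase hi
        have hle : i ≤ M := Finset.le_max' E i hiE
        rcases lt_or_eq_of_le hle with hlt | h
        · by_contra hcon
          have : i = M - 1 := by omega
          subst this
          exact hNA (M-1) hiE (by simpa using hMem)
        · exact absurd h hiM
      have h1 : vP (E.erase M) < g ^ (M - 1) := by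
        have := ih _ hsub (hNA.mono (Finset.erase_subset _ _)) (M-2) hbound
        simpa [show M - 2 + 1 = M - 1 by ring] using this
      have h2 : vP E = g ^ M + vP (E.erase M) := by
        rw [vP_erase hMem]; ring
      have h3 : g ^ M + g ^ (M-1) = g ^ (M+1) := by
        have := gz_step (M-1)
        simpa [show M - 1 + 2 = M + 1 by ring, show M-1+1 = M by ring] using this.symm
      calc vP E < g ^ M + g ^ (M-1) := by rw [h2]; linarith
        _ = g ^ (M+1) := h3
        _ ≤ g ^ (t+1) := gzpow_le (by omega)

lemma sum_pair (E : Finset ℤ) : ∃ a b : ℤ, vP E = a + b * g ∧ vQ E = a + b * gc := by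
  induction E using Finset.induction with
  | empty => exact ⟨0, 0, by simp [vP], by simp [vQ]⟩
  | insert a s hni ih =>
    obtain ⟨a, b, h1, h2⟩ := ih
    obtain ⟨c, d, h3, h4⟩ := pow_pair _
    refine ⟨a + c, b + d, ?_, ?_⟩ <;>
      · unfold vP vQ at *
        rw [Finset.sum_insert hni]
        push_cast
        first
          | (rw [h1, h3]; ring)
          | (rw [h2, h4]; ring)

lemma conj_transfer {E : Finset ℤ} {c d : ℤ} (h : vP E = c + d * g) :
    vQ E = c + d * gc := by
  obtain ⟨a, b, h1, h2⟩ := sum_pair E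
  have h3 : ((a - c : ℤ):ℝ) + (b - d : ℤ) * g = 0 := by
    push_cast
    rw [h] at h1
    linarith
  obtain ⟨ha, hb⟩ := int_indep h3
  have : a = c := by omega
  have : b = d := by omega
  subst ‹a = c›; subst ‹b = d›
  exact h2

lemma gc_zpow_even {i : ℤ} (h : Even i) : gc ^ i = g ^ (-i) := by
  have hgc : gc = -(g⁻¹) := by rw [inv_goldenRatio, neg_neg]
  rw [hgc, h.neg_zpow, inv_zpow, ← zpow_neg]

lemma gc_zpow_odd {i : ℤ} (h : Odd i) : gc ^ i = -(g ^ (-i)) := by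
  have hgc : gc = -(g⁻¹) := by rw [inv_goldenRatio, neg_neg]
  rw [hgc, h.neg_zpow, inv_zpow, ← zpow_neg]

lemma vQ_le_even (E : Finset ℤ) (hNA : NA E) (s : ℤ) (hs : ∀ i ∈ E, Even i → s ≤ i) :
    vQ E < g ^ (1 - s) := by
  classical
  have hsplit : vQ E ≤ ∑ i ∈ E.filter (fun i => Even i), gc ^ i := by
    unfold vQ
    rw [← Finset.sum_filter_add_sum_filter_not E (fun i => Even i)]
    have : ∑ i ∈ E.filter (fun i => ¬ Even i), gc ^ i ≤ 0 := by
      apply Finset.sum_nonpos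
      intro i hi
      have : Odd i := Int.not_even_iff_odd.mp (Finset.mem_filter.mp hi).2
      rw [gc_zpow_odd this]
      exact neg_nonpos.mpr (gzpow_pos (-i)).le
    linarith
  have heq : ∑ i ∈ E.filter (fun i => Even i), gc ^ i
      = vP ((E.filter (fun i => Even i)).image (fun i => -i)) := by
    unfold vP
    rw [Finset.sum_image (by intro x _ y _ h; simp only [neg_inj] at h; omega)]
    apply Finset.sum_congr rfl
    intro i hi
    exact gc_zpow_even (Finset.mem_filter.mp hi).2
  have hlt : vP ((E.filter (fun i => Even i)).image (fun i => -i)) < g ^ (-s + 1) := by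
    apply S1 _ ((hNA.mono (Finset.filter_subset _ _)).neg_image) (-s)
    intro i hi
    simp only [Finset.mem_image, Finset.mem_filter] at hi
    obtain ⟨a, ⟨ha, hae⟩, rfl⟩ := hi
    have := hs a ha hae
    omega
  calc vQ E ≤ _ := hsplit
    _ = _ := heq
    _ < g ^ (-s+1) := hlt
    _ = g ^ (1-s) := by ring_nf

lemma vQ_ge_odd (E : Finset ℤ) (hNA : NA E) (s : ℤ) (hs : ∀ i ∈ E, Odd i → s ≤ i) :
    -(g ^ (1 - s)) < vQ E := by
  classical
  have hsplit : vQ E ≥ ∑ i ∈ E.filter (fun i => Odd i), gc ^ i := by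
    unfold vQ
    rw [← Finset.sum_filter_add_sum_filter_not E (fun i => Odd i)]
    have : 0 ≤ ∑ i ∈ E.filter (fun i => ¬ Odd i), gc ^ i := by
      apply Finset.sum_nonneg
      intro i hi
      have : Even i := Int.not_odd_iff_even.mp (Finset.mem_filter.mp hi).2
      rw [gc_zpow_even this]
      exact (gzpow_pos (-i)).le
    linarith
  have heq : ∑ i ∈ E.filter (fun i => Odd i), gc ^ i
      = -(vP ((E.filter (fun i => Odd i)).image (fun i => -i))) := by
    unfold vP
    rw [Finset.sum_image (by intro x _ y _ h; simp only [neg_inj] at h; omega), ← Finset.sum_neg_distrib]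
    apply Finset.sum_congr rfl
    intro i hi
    exact (gc_zpow_odd (Finset.mem_filter.mp hi).2)
  have hlt : vP ((E.filter (fun i => Odd i)).image (fun i => -i)) < g ^ (-s + 1) := by
    apply S1 _ ((hNA.mono (Finset.filter_subset _ _)).neg_image) (-s)
    intro i hi
    simp only [Finset.mem_image, Finset.mem_filter] at hi
    obtain ⟨a, ⟨ha, hae⟩, rfl⟩ := hi
    have := hs a ha hae
    omega
  have : -(g ^ (1-s)) < ∑ i ∈ E.filter (fun i => Odd i), gc ^ i := by
    rw [heq]
    have : g ^ (-s+1) = g ^ (1-s) := by ring_nf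
    linarith [hlt, this]
  linarith

lemma vQ_abs_lt (E : Finset ℤ) (hNA : NA E) (s : ℤ) (hs : ∀ i ∈ E, s ≤ i) :
    |vQ E| < g ^ (1 - s) := by
  rw [abs_lt]
  constructor
  · have := vQ_ge_odd E hNA s (fun i hi _ => hs i hi)
    linarith
  · exact vQ_le_even E hNA s (fun i hi _ => hs i hi)

open Nat

def z (n : ℕ) : ℕ := (Nat.zeckendorf n).length

lemma z_zero : z 0 = 0 := by simp [z]

lemma Ztop {t x : ℕ} (ht : 2 ≤ t) (h1 : fib t ≤ x) (h2 : x < fib (t+1)) :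
    z x = z (x - fib t) + 1 := by
  have hx : 0 < x := lt_of_lt_of_le (fib_pos.mpr (by omega)) h1
  have hgf : greatestFib x = t := by
    have ha : t ≤ greatestFib x := le_greatestFib.mpr h1
    have hb : greatestFib x < t + 1 := greatestFib_lt.mpr h2
    omega
  rw [z, zeckendorf_of_pos hx, hgf]
  simp [z]

lemma z_fib {k : ℕ} (hk : 2 ≤ k) : z (fib k) = 1 := by
  rw [Ztop hk le_rfl (fib_lt_fib_succ hk)]
  simp [z, z_zero]

lemma fib_double {T : ℕ} (hT : 2 ≤ T) : fib T + fib T = fib (T+1) + fib (T-2) := by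
  obtain ⟨s, rfl⟩ := Nat.exists_eq_add_of_le hT
  have h1 : fib (2 + s + 1) = fib (s+1) + fib (s+2) := by
    rw [show 2+s+1 = s+1+2 by ring, fib_add_two]
  have h2 : fib (2 + s) = fib s + fib (s+1) := by
    rw [show 2+s = s+2 by ring, fib_add_two]
  have h3 : fib (s+2) = fib s + fib (s+1) := fib_add_two
  simp only [show 2+s-2 = s by omega, h1, h2]
  omega

lemma fib3 (T : ℕ) : fib (T+2) = fib (T+1) + fib T := by
  rw [fib_add_two]; omega

lemma Z1' : ∀ x : ℕ, ∀ k : ℕ, 2 ≤ k → z (x + fib k) ≤ z x + 1 := by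
  intro x
  induction x using Nat.strong_induction_on with
  | _ x ih =>
    intro k hk
    rcases Nat.eq_zero_or_pos x with rfl | hx
    · rw [zero_add, z_fib hk, z_zero]
    -- setup
    set T := greatestFib x with hT
    have hT2 : 2 ≤ T := le_greatestFib.mpr (show fib 2 ≤ x by rw [fib_two]; exact hx)
    have hTle : fib T ≤ x := fib_greatestFib_le x
    have hTlt : x < fib (T+1) := lt_fib_greatestFib_add_one x
    set r := x - fib T with hr
    have hxr : x = fib T + r := by omega
    have hrlt : r < fib (T-1) := by
      have : fib (T+1) = fib (T-1) + fib T := by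
        have := fib3 (T-1)
        have e : T - 1 + 2 = T + 1 := by omega
        have e2 : T - 1 + 1 = T := by omega
        rw [e, e2] at this
        omega
      omega
    have hrx : r < x := by
      have : 0 < fib T := fib_pos.mpr (by omega)
      omega
    have hzx : z x = z r + 1 := by
      have := Ztop hT2 hTle hTlt
      rw [← hr] at this; exact this
    -- case analysis on k vs T
    rcases Nat.lt_or_ge k (T-1) with hcase | hcase
    · -- k ≤ T - 2
      have hkT : k + 2 ≤ T := by omega
      have hfk : fib k ≤ fib (T-2) := fib_mono (by omega)
      have hsum : r + fib k < fib T := by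
        have : fib T = fib (T-2) + fib (T-1) := by
          have := fib3 (T-2)
          have e : T-2+2 = T := by omega
          have e2 : T-2+1 = T-1 := by omega
          rw [e, e2] at this; omega
        omega
      rcases Nat.lt_or_ge (r + fib k) (fib (T-1)) with hsub | hsub
      · -- top stays T
        have h1 : z (x + fib k) = z (r + fib k) + 1 := by
          have := Ztop hT2 (show fib T ≤ x + fib k by omega)
            (show x + fib k < fib (T+1) by
              have : fib (T+1) = fib (T-1) + fib T := by
                have := fib3 (T-1); have e : T-1+2 = T+1 := by omega
                have e2 : T-1+1 = T := by omega
                rw [e, e2] at this; omega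
              omega)
          have e : x + fib k - fib T = r + fib k := by omega
          rw [e] at this; exact this
        have h2 : z (r + fib k) ≤ z r + 1 := ih r hrx k hk
        omega
      · -- carry: top becomes T+1
        set s := r + fib k - fib (T-1) with hs
        have hslt : s < fib (T-2) := by
          have : fib T = fib (T-2) + fib (T-1) := by
            have := fib3 (T-2); have e : T-2+2 = T := by omega
            have e2 : T-2+1 = T-1 := by omega
            rw [e, e2] at this; omega
          omega
        have hT12 : 2 ≤ T - 1 := by omega
        have hzrk : z (r + fib k) = z s + 1 := by
          have := Ztop hT12 (show fib (T-1) ≤ r + fib k from hsub)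
            (show r + fib k < fib (T-1+1) by
              have e : T - 1 + 1 = T := by omega
              rw [e]; exact hsum)
          rw [← hs] at this; exact this
        have h2 : z (r + fib k) ≤ z r + 1 := ih r hrx k hk
        have hzs : z s ≤ z r := by omega
        have h1 : z (x + fib k) = z s + 1 := by
          have hxk : x + fib k = fib (T+1) + s := by
            have : fib (T+1) = fib (T-1) + fib T := by
              have := fib3 (T-1); have e : T-1+2 = T+1 := by omega
              have e2 : T-1+1 = T := by omega
              rw [e, e2] at this; omega
            omega
          have := Ztop (show 2 ≤ T+1 by omega)
            (show fib (T+1) ≤ x + fib k by omega)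
            (show x + fib k < fib (T+2) by
              have h4 : fib (T+2) = fib (T+1) + fib T := fib3 T
              have : s < fib T := lt_of_lt_of_le hslt (fib_mono (by omega))
              omega)
          have e : x + fib k - fib (T+1) = s := by omega
          rw [e] at this; exact this
        omega
    rcases Nat.eq_or_lt_of_le hcase with hcase1 | hcase
    · -- k = T - 1
      have hfk : fib k = fib (T-1) := by rw [← hcase1]
      have hxk : x + fib k = fib (T+1) + r := by
        rw [hfk]
        have : fib (T+1) = fib (T-1) + fib T := by
          have := fib3 (T-1); have e : T-1+2 = T+1 := by omega
          have e2 : T-1+1 = T := by omega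
          rw [e, e2] at this; omega
        omega
      have h1 : z (x + fib k) = z r + 1 := by
        have := Ztop (show 2 ≤ T+1 by omega)
          (show fib (T+1) ≤ x + fib k by omega)
          (show x + fib k < fib (T+2) by
            have h4 : fib (T+2) = fib (T+1) + fib T := fib3 T
            have : r < fib T := lt_of_lt_of_le hrlt (fib_mono (by omega))
            omega)
        have e : x + fib k - fib (T+1) = r := by omega
        rw [e] at this; exact this
      omega
    rcases Nat.eq_or_lt_of_le (show T ≤ k by omega) with hcase2 | hcase
    · -- k = T
      have hfkT : fib k = fib T := by rw [hcase2]
      rw [hfkT] at *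
      have hkT2 : 2 ≤ T := hT2
      have hxk : x + fib T = fib (T+1) + (fib (T-2) + r) := by
        have := fib_double hT2
        omega
      have hlt2 : fib (T-2) + r < fib T := by
        have : fib T = fib (T-2) + fib (T-1) := by
          have := fib3 (T-2); have e : T-2+2 = T := by omega
          have e2 : T-2+1 = T-1 := by omega
          rw [e, e2] at this; omega
        omega
      have h1 : z (x + fib T) = z (fib (T-2) + r) + 1 := by
        have := Ztop (show 2 ≤ T+1 by omega)
          (show fib (T+1) ≤ x + fib T by omega)
          (show x + fib T < fib (T+2) by
            have h4 : fib (T+2) = fib (T+1) + fib T := fib3 T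
            omega)
        have e : x + fib T - fib (T+1) = fib (T-2) + r := by omega
        rw [e] at this; exact this
      rcases Nat.eq_or_lt_of_le hT2 with h2 | h2
      · -- T = 2 : r = 0
        have hf0 : fib (T-2) = 0 := by rw [← h2]; rfl
        rw [hf0] at h1
        simp only [Nat.zero_add] at h1
        omega
      · -- T ≥ 3
        have h3 : ∃ k2, 2 ≤ k2 ∧ fib (T-2) = fib k2 := by
          rcases Nat.eq_or_lt_of_le h2 with h4 | h4
          · exact ⟨2, le_rfl, by rw [← h4]; rfl⟩
          · exact ⟨T-2, by omega, rfl⟩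
        obtain ⟨k2, hk2, hfk2⟩ := h3
        rw [hfk2] at h1
        have := ih r hrx k2 hk2
        rw [add_comm (fib k2) r] at h1
        omega
    rcases Nat.eq_or_lt_of_le (show T + 1 ≤ k by omega) with hcase3 | hcase
    · -- k = T+1
      have h1 : z (x + fib k) = z r + 1 := by
        have hxk : x + fib k = fib (T+2) + r := by
          have h4 : fib (T+2) = fib (T+1) + fib T := fib3 T
          rw [← hcase3]
          omega
        have := Ztop (show 2 ≤ T+2 by omega)
          (show fib (T+2) ≤ x + fib k by omega)
          (show x + fib k < fib (T+3) by
            have h4 : fib (T+3) = fib (T+2) + fib (T+1) := fib3 (T+1)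
            have : r < fib (T+1) := lt_of_lt_of_le hrlt (fib_mono (by omega))
            omega)
        have e : x + fib k - fib (T+2) = r := by omega
        rw [e] at this; exact this
      omega
    · -- k ≥ T+2
      have h1 : z (x + fib k) = z x + 1 := by
        have := Ztop (show 2 ≤ k by omega)
          (show fib k ≤ x + fib k by omega)
          (show x + fib k < fib (k+1) by
            have h4 : fib (k+1) = fib k + fib (k-1) := by
              have := fib3 (k-1); have e : k-1+2 = k+1 := by omega
              have e2 : k-1+1 = k := by omega
              rw [e, e2] at this; omega
            have : x < fib (k-1) := lt_of_lt_of_le hTlt (fib_mono (by omega))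
            omega)
        have e : x + fib k - fib k = x := by omega
        rw [e] at this; exact this
      omega

lemma Z1 (x k : ℕ) : z (x + fib k) ≤ z x + 1 := by
  match k with
  | 0 => simp [fib_zero]
  | 1 => simpa [show fib 1 = fib 2 from rfl] using Z1' x 2 le_rfl
  | (n+2) => exact Z1' x (n+2) (by omega)

open Real goldenRatio Nat



lemma powform : ∀ k : ℕ, g ^ ((k:ℤ)+1) = fib (k+1) * g + fib k
    ∧ gc ^ ((k:ℤ)+1) = fib (k+1) * gc + fib k := by
  intro k
  induction k with
  | zero => norm_num
  | succ k ih =>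
    obtain ⟨h1, h2⟩ := ih
    constructor
    · have : g ^ (((k:ℤ)+1)+1) = g ^ ((k:ℤ)+1) * g := by
        rw [← zpow_add_one₀ g_ne]
      push_cast
      rw [show ((k:ℤ)+1+1) = ((k:ℤ)+1)+1 by ring] at *
      rw [this, h1]
      have hf : (fib (k+2) : ℝ) = fib k + fib (k+1) := by
        rw [fib_add_two]; push_cast; ring
      rw [hf]
      push_cast
      linear_combination (fib (k+1) : ℝ) * goldenRatio_sq
    · have : gc ^ (((k:ℤ)+1)+1) = gc ^ ((k:ℤ)+1) * gc := by
        rw [← zpow_add_one₀ gc_ne]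
      push_cast
      rw [show ((k:ℤ)+1+1) = ((k:ℤ)+1)+1 by ring] at *
      rw [this, h2]
      have hf : (fib (k+2) : ℝ) = fib k + fib (k+1) := by
        rw [fib_add_two]; push_cast; ring
      rw [hf]
      push_cast
      linear_combination (fib (k+1) : ℝ) * goldenConj_sq

lemma powg {k : ℕ} (hk : 1 ≤ k) : g ^ (k:ℤ) = fib k * g + fib (k-1) := by
  obtain ⟨s, rfl⟩ := Nat.exists_eq_add_of_le hk
  have := (powform s).1
  rw [show ((1+s:ℕ):ℤ) = (s:ℤ)+1 by push_cast; ring, this]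
  norm_num [show 1+s-1 = s by omega, show 1+s = s+1 by omega]

lemma powgc {k : ℕ} (hk : 1 ≤ k) : gc ^ (k:ℤ) = fib k * gc + fib (k-1) := by
  obtain ⟨s, rfl⟩ := Nat.exists_eq_add_of_le hk
  have := (powform s).2
  rw [show ((1+s:ℕ):ℤ) = (s:ℤ)+1 by push_cast; ring, this]
  norm_num [show 1+s-1 = s by omega, show 1+s = s+1 by omega]

-- g^(-2j) = fib(2j+1) - fib(2j) g
lemma LE (j : ℕ) : g ^ (-(2*(j:ℤ))) = (fib (2*j+1) : ℝ) - (fib (2*j):ℝ) * g := by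
  rcases Nat.eq_zero_or_pos j with rfl | hj
  · norm_num
  have he : Even (2*(j:ℤ)) := ⟨j, by ring⟩
  have h1 : gc ^ ((2*j:ℕ):ℤ) = (fib (2*j):ℝ) * gc + fib (2*j-1) := powgc (by omega)
  have h2 : g ^ (-(2*(j:ℤ))) = gc ^ ((2*j:ℕ):ℤ) := by
    rw [gc_zpow_even (i := ((2*j:ℕ):ℤ)) ⟨(j:ℤ), by push_cast; ring⟩]
    norm_cast
  rw [h2, h1]
  have h3 : gc = 1 - g := by linarith [goldenRatio_add_goldenConj]
  have h4 : (fib (2*j+1) : ℝ) = fib (2*j) + fib (2*j-1) := by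
    have : fib (2*j+1) = fib (2*j-1) + fib (2*j) := by
      have := fib_add_two (n := 2*j-1)
      rw [show 2*j-1+2 = 2*j+1 by omega, show 2*j-1+1 = 2*j by omega] at this
      exact this
    rw [this]; push_cast; ring
  rw [h3, h4]; ring

-- g^(2j) = fib(2j+1) - fib(2j) gc
lemma LG (j : ℕ) : g ^ ((2*(j:ℤ))) = (fib (2*j+1) : ℝ) - (fib (2*j):ℝ) * gc := by
  rcases Nat.eq_zero_or_pos j with rfl | hj
  · norm_num
  have h1 : g ^ ((2*j:ℕ):ℤ) = (fib (2*j):ℝ) * g + fib (2*j-1) := powg (by omega)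
  have h2 : ((2*j:ℕ):ℤ) = 2*(j:ℤ) := by push_cast; ring
  rw [← h2, h1]
  have h3 : g = 1 - gc := by linarith [goldenRatio_add_goldenConj]
  have h4 : (fib (2*j+1) : ℝ) = fib (2*j) + fib (2*j-1) := by
    have : fib (2*j+1) = fib (2*j-1) + fib (2*j) := by
      have := fib_add_two (n := 2*j-1)
      rw [show 2*j-1+2 = 2*j+1 by omega, show 2*j-1+1 = 2*j by omega] at this
      exact this
    rw [this]; push_cast; ring
  nlinarith [h3]

-- Lucas even: g^(2k) + g^(-2k) = fib(2k+1) + fib(2k-1)   (k ≥ 1)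
lemma Luceven {k : ℕ} (hk : 1 ≤ k) :
    g ^ (2*(k:ℤ)) + g ^ (-(2*(k:ℤ))) = (fib (2*k+1) : ℝ) + fib (2*k-1) := by
  rw [LE, LG]
  have h4 : (fib (2*k+1) : ℝ) = fib (2*k) + fib (2*k-1) := by
    have : fib (2*k+1) = fib (2*k-1) + fib (2*k) := by
      have := fib_add_two (n := 2*k-1)
      rw [show 2*k-1+2 = 2*k+1 by omega, show 2*k-1+1 = 2*k by omega] at this
      exact this
    rw [this]; push_cast; ring
  have h5 : g + gc = 1 := goldenRatio_add_goldenConj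
  nlinarith [h4, h5]

-- Lucas odd : g^(2j+1) = (fib (2j+2) + fib (2j)) + g^(-(2j+1))
lemma Lucodd (j : ℕ) :
    g ^ (2*(j:ℤ)+1) = ((fib (2*j+2) : ℝ) + fib (2*j)) + g ^ (-(2*(j:ℤ)+1)) := by
  have hc : ((2*j+1:ℕ):ℤ) = 2*(j:ℤ)+1 := by push_cast; ring
  rw [← hc]
  have h1 : g ^ ((2*j+1:ℕ):ℤ) = (fib (2*j+1):ℝ) * g + fib (2*j) := by
    have := powg (k := 2*j+1) (by omega); rw [this]; norm_num
  have ho : Odd ((2*j+1:ℕ):ℤ) := ⟨(j:ℤ), by push_cast; ring⟩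
  have h2 : gc ^ ((2*j+1:ℕ):ℤ) = -(g ^ (-((2*j+1:ℕ):ℤ))) := gc_zpow_odd ho
  have h3 : gc ^ ((2*j+1:ℕ):ℤ) = (fib (2*j+1):ℝ) * gc + fib (2*j) := by
    have := powgc (k := 2*j+1) (by omega); rw [this]; norm_num
  have h4 : (fib (2*j+2) : ℝ) = fib (2*j) + fib (2*j+1) := by
    rw [fib_add_two]; push_cast; ring
  have h5 : g + gc = 1 := goldenRatio_add_goldenConj
  have h6 : g ^ (-((2*j+1:ℕ):ℤ)) = -((fib (2*j+1):ℝ) * gc + fib (2*j)) := by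
    rw [← h3, h2]; ring
  linear_combination h1 - h6 - h4 + (fib (2*j+1):ℝ) * h5

-- additional helpers
lemma gzpow_lt_iff {a b : ℤ} : g ^ a < g ^ b ↔ a < b := by
  constructor
  · intro h
    by_contra hc
    exact absurd (gzpow_le (by omega)) (not_le.mpr h)
  · exact gzpow_lt

lemma z_one : z 1 = 1 := z_fib (k := 2) le_rfl

lemma z_two : z 2 = 1 := by
  have : (2:ℕ) = fib 3 := rfl
  rw [this]; exact z_fib (by omega)

lemma Z2 (x a b : ℕ) : z (x + fib a + fib b) ≤ z x + 2 := by
  have h1 := Z1 (x + fib a) b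
  have h2 := Z1 x a
  omega

lemma Hlem {j m' : ℕ} (hj : 2 ≤ j) (h1 : fib (2*j-3) ≤ m') (h2 : m' < fib (2*j)) :
    z (m' + fib (2*j) + fib (2*j-2)) ≤ z m' + 1 := by
  have hm' : 1 ≤ m' := le_trans (by have : 0 < fib (2*j-3) := fib_pos.mpr (by omega); omega) h1
  set T := greatestFib m' with hT
  have hT2 : 2 ≤ T := le_greatestFib.mpr (show fib 2 ≤ m' by simpa [fib_two] using hm')
  have hTle : fib T ≤ m' := fib_greatestFib_le m'
  have hTlt : m' < fib (T+1) := lt_fib_greatestFib_add_one m'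
  have hTub : T ≤ 2*j - 1 := by
    have : greatestFib m' < 2*j := greatestFib_lt.mpr h2
    omega
  have hTlb : 2*j - 3 ≤ T := by
    rcases Nat.eq_zero_or_pos (2*j-3) with h | h
    · omega
    · exact le_greatestFib.mpr h1
  set r := m' - fib T with hr
  have hzm : z m' = z r + 1 := by
    have := Ztop hT2 hTle hTlt
    rw [← hr] at this; exact this
  have hrlt : r < fib (T-1) := by
    have : fib (T+1) = fib (T-1) + fib T := by
      have := fib3 (T-1)
      rw [show T-1+2 = T+1 by omega, show T-1+1 = T by omega] at this
      omega
    omega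
  have hT3 : T = 2*j-3 ∨ T = 2*j-2 ∨ T = 2*j-1 := by omega
  rcases hT3 with hc | hc | hc
  · -- T = 2j-3 : total = fib (2j+1) + r
    have hjj : 3 ≤ j := by omega
    have he : m' + fib (2*j) + fib (2*j-2) = r + fib (2*j+1) := by
      have e1 : fib (2*j+1) = fib (2*j-1) + fib (2*j) := by
        have := fib3 (2*j-1)
        rw [show 2*j-1+2 = 2*j+1 by omega, show 2*j-1+1 = 2*j by omega] at this
        omega
      have e2 : fib (2*j-1) = fib (2*j-3) + fib (2*j-2) := by
        have := fib3 (2*j-3)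
        rw [show 2*j-3+2 = 2*j-1 by omega, show 2*j-3+1 = 2*j-2 by omega] at this
        omega
      have : m' = fib (2*j-3) + r := by rw [← hc]; omega
      omega
    rw [he]
    have := Z1 r (2*j+1)
    omega
  · -- T = 2j-2 : total = fib (2j+1) + fib (2j-4) + r
    have he : m' + fib (2*j) + fib (2*j-2) = r + fib (2*j+1) + fib (2*j-4) := by
      have e1 : fib (2*j+1) = fib (2*j-1) + fib (2*j) := by
        have := fib3 (2*j-1)
        rw [show 2*j-1+2 = 2*j+1 by omega, show 2*j-1+1 = 2*j by omega] at this
        omega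
      have e2 : fib (2*j-2) + fib (2*j-2) = fib (2*j-1) + fib (2*j-4) := by
        have := fib_double (T := 2*j-2) (by omega)
        rw [show 2*j-2+1 = 2*j-1 by omega, show 2*j-2-2 = 2*j-4 by omega] at this
        omega
      have : m' = fib (2*j-2) + r := by rw [← hc]; omega
      omega
    rw [he]
    have := Z2 r (2*j+1) (2*j-4)
    omega
  · -- T = 2j-1 : total = fib (2j+1) + fib (2j-2) + r
    have he : m' + fib (2*j) + fib (2*j-2) = r + fib (2*j+1) + fib (2*j-2) := by
      have e1 : fib (2*j+1) = fib (2*j-1) + fib (2*j) := by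
        have := fib3 (2*j-1)
        rw [show 2*j-1+2 = 2*j+1 by omega, show 2*j-1+1 = 2*j by omega] at this
        omega
      have : m' = fib (2*j-1) + r := by rw [← hc]; omega
      omega
    rw [he]
    have := Z2 r (2*j+1) (2*j-2)
    omega

lemma erase_lb {E : Finset ℤ} (hNA : NA E) {a : ℤ} (ha : a ∈ E)
    (hmin : ∀ i ∈ E, a ≤ i) : ∀ i ∈ E.erase a, a + 2 ≤ i := by
  intro i hi
  have hiE : i ∈ E := Finset.mem_of_mem_erase hi
  have hia : i ≠ a := Finset.ne_of_mem_erase hi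
  have h1 : a ≤ i := hmin i hiE
  by_contra hcon
  have : i = a + 1 := by omega
  exact hNA a ha (this ▸ hiE)

lemma card_erase2 {E : Finset ℤ} {a b : ℤ} (ha : a ∈ E) (hb : b ∈ E) (hab : a ≠ b) :
    ((E.erase a).erase b).card + 2 = E.card := by
  have hb' : b ∈ E.erase a := Finset.mem_erase.mpr ⟨fun h => hab h.symm, hb⟩
  rw [Finset.card_erase_of_mem hb', Finset.card_erase_of_mem ha]
  have h1 : 0 < E.card := Finset.card_pos.mpr ⟨a, ha⟩
  have h2 : 1 < E.card := Finset.one_lt_card.mpr ⟨a, ha, b, hb, hab⟩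
  omega

-- KEY INDUCTION
lemma vQ_bottom_lower {E : Finset ℤ} (hNA : NA E) {μ : ℤ} (hμmem : μ ∈ E)
    (hμlb : ∀ i ∈ E, μ ≤ i) (hμeven : Even μ) : g ^ (-μ-1) < vQ E := by
  have h2 : vQ E = g ^ (-μ) + vQ (E.erase μ) := by
    rw [vQ_erase hμmem, gc_zpow_even hμeven]; ring
  have hrest : ∀ i ∈ E.erase μ, Odd i → μ+3 ≤ i := by
    intro i hi hoi
    have := erase_lb hNA hμmem hμlb i hi
    rcases hoi with ⟨t, ht⟩; rcases hμeven with ⟨s, hs⟩; omega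
  have h1 : -(g ^ (1-(μ+3))) < vQ (E.erase μ) :=
    vQ_ge_odd _ (hNA.mono (Finset.erase_subset _ _)) _ hrest
  have h3 : g ^ (-μ) = g ^ (-μ-1) + g ^ (-μ-2) := by
    have := gz_step (-μ-2)
    rw [show -μ-2+2 = -μ by ring, show -μ-2+1 = -μ-1 by ring] at this
    exact this
  have h4 : g ^ (1-(μ+3)) = g ^ (-μ-2) := by
    rw [show (1:ℤ)-(μ+3) = -μ-2 by ring]
  rw [h2, h3]
  rw [h4] at h1
  linarith

theorem key : ∀ N : ℕ, ∀ E : Finset ℤ, E.card ≤ N → NA E →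
    (∀ n : ℕ, vP E = (n:ℝ) → z n ≤ E.card) ∧
    (∀ m j : ℕ, 1 ≤ m → 1 ≤ j →
      (∀ i ∈ E, -(2*(j:ℤ)) ≤ i ∧ i ≤ 2*(j:ℤ)-1) →
      vP E = (m:ℝ) - g ^ (-(2*(j:ℤ))) →
      z m + (if m < fib (2*j-1) then 1 else 0) ≤ E.card) := by
  intro N
  induction N with
  | zero =>
    intro E hcard hNA
    have hE : E = ∅ := Finset.card_eq_zero.mp (by omega)
    subst hE
    constructor
    · intro n hvP
      have h0 : (n:ℝ) = 0 := by rw [← hvP]; simp [vP]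
      have : n = 0 := by exact_mod_cast h0
      simp [this, z_zero]
    · intro m j hm1 hj1 _ hvP
      exfalso
      have h0 : (0:ℝ) = (m:ℝ) - g ^ (-(2*(j:ℤ))) := by rw [← hvP]; simp [vP]
      have h1 : g ^ (-(2*(j:ℤ))) < g ^ (0:ℤ) := gzpow_lt (by omega)
      have h2 : (1:ℝ) ≤ (m:ℝ) := by exact_mod_cast hm1
      simp only [zpow_zero] at h1
      linarith
  | succ N ihN =>
    intro E hcard hNA
    constructor
    · -- MAIN CLAIM
      intro n hvP
      rcases E.eq_empty_or_nonempty with rfl | hne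
      · have h0 : (n:ℝ) = 0 := by rw [← hvP]; simp [vP]
        have : n = 0 := by exact_mod_cast h0
        simp [this, z_zero]
      have hcard1 : 1 ≤ E.card := Finset.card_pos.mpr hne
      have hvpos : (0:ℝ) < vP E := vP_pos hne
      have hn1 : 1 ≤ n := by
        by_contra h
        have : n = 0 := by omega
        rw [this] at hvP; simp [hvP] at hvpos
      by_cases hn2 : n < 2
      · have : n = 1 := by omega
        rw [this, z_one]; exact hcard1
      push_neg at hn2
      have hn2' : (2:ℝ) ≤ (n:ℝ) := by exact_mod_cast hn2
      have hQ : vQ E = (n:ℝ) := by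
        have := conj_transfer (E := E) (c := (n:ℤ)) (d := 0) (by rw [hvP]; push_cast; ring)
        rw [this]; push_cast; ring
      set M := E.max' hne with hM
      have hMmem : M ∈ E := E.max'_mem hne
      set μ := E.min' hne with hμ
      have hμmem : μ ∈ E := E.min'_mem hne
      have hMub : ∀ i ∈ E, i ≤ M := fun i hi => E.le_max' i hi
      have hμlb : ∀ i ∈ E, μ ≤ i := fun i hi => E.min'_le i hi
      have hub : (n:ℝ) < g ^ (M+1) := by rw [← hvP]; exact S1 E hNA M hMub
      have hlb : g ^ M ≤ (n:ℝ) := by rw [← hvP]; exact single_le_vP hMmem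
      have hM1 : 1 ≤ M := by
        by_contra hc
        push_neg at hc
        have h1 : vP E < g ^ ((0:ℤ)+1) := S1 E hNA 0 (fun i hi => by have := hMub i hi; omega)
        rw [hvP] at h1
        have h2 : g ^ ((0:ℤ)+1) = g := by norm_num
        rw [h2] at h1
        linarith [goldenRatio_lt_two]
      have hμ0 : μ ≤ -1 := by
        by_contra hc
        push_neg at hc
        have h1 : vQ E < g ^ (1-(0:ℤ)) := vQ_le_even E hNA 0 (fun i hi _ => by have := hμlb i hi; omega)
        rw [hQ] at h1
        have h2 : g ^ ((1:ℤ)-0) = g := by norm_num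
        rw [h2] at h1
        linarith [goldenRatio_lt_two]
      have hMμ : M ≤ -μ := by
        have h1 : (n:ℝ) < g ^ (1 - μ) :=
          hQ ▸ vQ_le_even E hNA μ (fun i hi _ => hμlb i hi)
        have h2 : g ^ M < g ^ (1 - μ) := lt_of_le_of_lt hlb h1
        have := gzpow_lt_iff.mp h2
        omega
      have hμeven : Even μ := by
        by_contra hodd
        have hodd' : Odd μ := Int.not_even_iff_odd.mp hodd
        have h1 : vQ E = -(g ^ (-μ)) + vQ (E.erase μ) := by
          rw [vQ_erase hμmem, gc_zpow_odd hodd']; ring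
        have h3 : |vQ (E.erase μ)| < g ^ (1 - (μ+2)) :=
          vQ_abs_lt _ (hNA.mono (Finset.erase_subset _ _)) (μ+2) (erase_lb hNA hμmem hμlb)
        have h4 : g ^ (1-(μ+2)) = g ^ (-μ-1) := by rw [show (1:ℤ)-(μ+2) = -μ-1 by ring]
        have h5 : g ^ (-μ-1) < g ^ (-μ) := gzpow_lt (by omega)
        rw [h4] at h3
        have h6 := abs_lt.mp h3
        have : vQ E < 0 := by rw [h1]; linarith
        rw [hQ] at this
        linarith
      rcases Int.even_or_odd M with hMeven | hModd
      · -- M EVEN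
        obtain ⟨k, hk1, hkM⟩ : ∃ k : ℕ, 1 ≤ k ∧ M = 2*(k:ℤ) := by
          obtain ⟨t, ht⟩ := hMeven
          exact ⟨t.toNat, by omega, by omega⟩
        have hnegM : -M ∈ E := by
          by_contra hnM
          have hμne : μ ≠ -M := fun h => hnM (h ▸ hμmem)
          have hμM2 : μ ≤ -M - 2 := by
            obtain ⟨t, ht⟩ := hμeven
            omega
          have h1 := vQ_bottom_lower hNA hμmem hμlb hμeven
          have h5 : g ^ (M+1) ≤ g ^ (-μ-1) := gzpow_le (by omega)
          rw [hQ] at h1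
          linarith
        have hMne : M ≠ -M := by omega
        set E' := (E.erase M).erase (-M) with hE'
        have hNA' : NA E' := hNA.mono ((Finset.erase_subset _ _).trans (Finset.erase_subset _ _))
        have hcard' : E'.card + 2 = E.card := card_erase2 hMmem hnegM hMne
        have hvPE' : vP E' = vP E - g^M - g^(-M) := by
          rw [hE', vP_erase (Finset.mem_erase.mpr ⟨by omega, hnegM⟩), vP_erase hMmem]
        set L : ℕ := fib (2*k+1) + fib (2*k-1) with hL
        have hLuc : g^M + g^(-M) = (L:ℝ) := by
          rw [hkM, hL]
          push_cast
          exact Luceven hk1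
        have hgneg1 : g ^ (-M) < 1 := by
          have := gzpow_lt (a := -M) (b := 0) (by omega)
          simpa using this
        have hLn : L ≤ n := by
          have h2 : (L:ℝ) < (n:ℝ) + 1 := by rw [← hLuc]; linarith
          have h3 : L < n + 1 := by exact_mod_cast h2
          omega
        set n' := n - L with hn'
        have hvn' : vP E' = (n' : ℝ) := by
          rw [hvPE', hvP]
          have : (n':ℝ) = (n:ℝ) - (L:ℝ) := by
            rw [hn', Nat.cast_sub hLn]
          rw [this]; linarith [hLuc]
        have hz' : z n' ≤ E'.card := (ihN E' (by omega) hNA').1 n' hvn'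
        have hzn : z n ≤ z n' + 2 := by
          have he : n = n' + fib (2*k+1) + fib (2*k-1) := by omega
          rw [he]; exact Z2 _ _ _
        omega
      · -- M ODD
        obtain ⟨t, ht⟩ := hModd
        by_cases hM3 : M ≤ 1
        · -- M = 1 : n = 2
          have hMeq : M = 1 := by omega
          have h2 : (n:ℝ) < g ^ ((1:ℤ)+1) := by
            have h2' := hub
            rw [hMeq] at h2'
            exact h2'
          have h3 : g ^ ((1:ℤ)+1) = g + 1 := by
            rw [show ((1:ℤ)+1) = ((2:ℕ):ℤ) by norm_num, zpow_natCast, goldenRatio_sq]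
          have h4 : (n:ℝ) < 3 := by rw [h3] at h2; linarith [goldenRatio_lt_two]
          have : n = 2 := by
            have : n < 3 := by exact_mod_cast h4
            omega
          rw [this, z_two]
          exact hcard1
        push_neg at hM3
        have hM3' : 3 ≤ M := by omega
        set j : ℕ := t.toNat with hj
        have hjM : M = 2*(j:ℤ)+1 := by omega
        have hj1 : 1 ≤ j := by omega
        have hμeq : μ = -(M+1) := by
          by_contra hc
          have hμ3 : μ ≤ -M-3 ∨ -μ ≤ M := by
            obtain ⟨s, hs⟩ := hμeven
            omega
          rcases hμ3 with h | h
          · have h1 := vQ_bottom_lower hNA hμmem hμlb hμeven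
            have h5 : g ^ (M+1) ≤ g ^ (-μ-1) := gzpow_le (by omega)
            rw [hQ] at h1
            linarith
          · -- -μ ≤ M with M ≤ -μ gives μ = -M, impossible by parity
            obtain ⟨s, hs⟩ := hμeven
            omega
        have hnegM1 : -(M+1) ∈ E := hμeq ▸ hμmem
        have hMne : M ≠ -(M+1) := by omega
        set E'' := (E.erase M).erase (-(M+1)) with hE''
        have hNA'' : NA E'' := hNA.mono ((Finset.erase_subset _ _).trans (Finset.erase_subset _ _))
        have hcard'' : E''.card + 2 = E.card := card_erase2 hMmem hnegM1 hMne
        have hvPE'' : vP E'' = vP E - g^M - g^(-(M+1)) := by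
          rw [hE'', vP_erase (Finset.mem_erase.mpr ⟨by omega, hnegM1⟩), vP_erase hMmem]
        set L' : ℕ := fib (2*j+2) + fib (2*j) with hL'
        have hLuc : g^M = (L':ℝ) + g^(-M) := by
          rw [hjM, hL']
          push_cast
          have := Lucodd j
          rw [show -(2*(j:ℤ)+1) = -(2*(j:ℤ))-1 by ring] at this
          rw [this]
          ring_nf
        have hgset : g^M + g^(-(M+1)) = (L':ℝ) + g^(-(2*(j:ℤ))) := by
          have hstep : g ^ (-M+1) = g ^ (-M) + g ^ (-M-1) := by
            have := gz_step (-M-1)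
            rw [show -M-1+2 = -M+1 by ring, show -M-1+1 = -M by ring] at this
            exact this
          have he1 : -(2*(j:ℤ)) = -M+1 := by omega
          have he2 : (-(M+1)) = -M-1 := by ring
          rw [he1, he2, hstep, hLuc]
          ring
        have hL'lt : (L':ℝ) < (n:ℝ) := by
          have h1 : g ^ (-M) > 0 := gzpow_pos _
          linarith [hlb, hLuc]
        have hL'n : L' + 1 ≤ n := by
          have : (L':ℝ) < (n:ℝ) := hL'lt
          have : L' < n := by exact_mod_cast this
          omega
        set m : ℕ := n - L' with hm
        have hm1 : 1 ≤ m := by omega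
        have hvm : vP E'' = (m:ℝ) - g ^ (-(2*(j:ℤ))) := by
          rw [hvPE'', hvP]
          have hleL : L' ≤ n := by omega
          have : (m:ℝ) = (n:ℝ) - (L':ℝ) := by rw [hm, Nat.cast_sub hleL]
          rw [this]
          linarith [hgset]
        have hwin : ∀ i ∈ E'', -(2*(j:ℤ)) ≤ i ∧ i ≤ 2*(j:ℤ)-1 := by
          intro i hi
          have hiE : i ∈ E := Finset.mem_of_mem_erase (Finset.mem_of_mem_erase hi)
          have hine1 : i ≠ -(M+1) := Finset.ne_of_mem_erase hi
          have hine2 : i ≠ M := Finset.ne_of_mem_erase (Finset.mem_of_mem_erase hi)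
          have hile : i ≤ M := hMub i hiE
          have hige : μ ≤ i := hμlb i hiE
          have hine3 : i ≠ M - 1 := by
            intro h
            exact hNA (M-1) (h ▸ hiE) (by rwa [show M-1+1 = M by ring])
          have hine4 : i ≠ -(M+1)+1 := by
            intro h
            exact hNA (-(M+1)) hnegM1 (h ▸ hiE)
          omega
        have hA := (ihN E'' (by omega) hNA'').2 m j hm1 hj1 hwin hvm
        have hzm : z m ≤ E''.card := by omega
        have hzn : z n ≤ z m + 2 := by
          have he : n = m + fib (2*j+2) + fib (2*j) := by omega
          rw [he]; exact Z2 _ _ _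
        omega
    · -- A CLAIM
      intro m j hm1 hj1 hwin hvP
      have hvpos : (0:ℝ) < vP E := by
        rw [hvP]
        have h1 : g ^ (-(2*(j:ℤ))) ≤ g ^ (-2:ℤ) := gzpow_le (by omega)
        have h2 : g ^ (-2:ℤ) < g ^ (0:ℤ) := gzpow_lt (by omega)
        have h3 : (1:ℝ) ≤ (m:ℝ) := by exact_mod_cast hm1
        rw [zpow_zero] at h2
        linarith
      have hne : E.Nonempty := by
        rcases E.eq_empty_or_nonempty with rfl | h
        · simp [vP] at hvpos
        · exact h
      have hcard1 : 1 ≤ E.card := Finset.card_pos.mpr hne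
      have hQ : vQ E = (m:ℝ) - g ^ (2*(j:ℤ)) := by
        have hc : vP E = (((m:ℤ) - fib (2*j+1) : ℤ):ℝ) + ((fib (2*j) : ℤ):ℝ) * g := by
          rw [hvP, LE j]; push_cast; ring
        have h2 := conj_transfer hc
        rw [h2, LG j]
        push_cast; ring
      have hub : vP E < g ^ (2*(j:ℤ)) := by
        have h1 := S1 E hNA (2*(j:ℤ)-1) (fun i hi => (hwin i hi).2)
        rw [show 2*(j:ℤ)-1+1 = 2*(j:ℤ) by ring] at h1
        exact h1
      have hmub : (m:ℝ) < g ^ (2*(j:ℤ)) + g ^ (-(2*(j:ℤ))) := by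
        rw [hvP] at hub; linarith
      have h2jnot : -(2*(j:ℤ)) ∉ E := by
        intro hmem
        have hminE : ∀ i ∈ E, -(2*(j:ℤ)) ≤ i := fun i hi => (hwin i hi).1
        have hbig := vQ_bottom_lower hNA hmem hminE ⟨-(j:ℤ), by ring⟩
        rw [show -(-(2*(j:ℤ)))-1 = 2*(j:ℤ)-1 by ring, hQ] at hbig
        -- m - g^{2j} < g^{-2j} ≤ 1 ≤ g^{2j-1} : contra
        have h1 : g ^ (-(2*(j:ℤ))) ≤ g ^ (0:ℤ) := gzpow_le (by omega)
        have h2 : g ^ (0:ℤ) ≤ g ^ (2*(j:ℤ)-1) := gzpow_le (by omega)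
        rw [zpow_zero] at h1 h2
        linarith
      by_cases hbot : -(2*(j:ℤ))+1 ∈ E
      · -- CASE (a)
        have hminE : ∀ i ∈ E, -(2*(j:ℤ))+1 ≤ i := by
          intro i hi
          have h1 := (hwin i hi).1
          have h2 : i ≠ -(2*(j:ℤ)) := fun h => h2jnot (h ▸ hi)
          omega
        have htopnot : 2*(j:ℤ)-1 ∉ E := by
          intro htop
          have hp : g ^ (2*(j:ℤ)-1) + g ^ (-(2*(j:ℤ))+1) ≤ vP E :=
            pair_le_vP htop hbot (by omega)
          have hstep : g ^ (-(2*(j:ℤ))+2) = g ^ (-(2*(j:ℤ))+1) + g ^ (-(2*(j:ℤ))) := gz_step _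
          have hmlb : g ^ (2*(j:ℤ)-1) + g ^ (-(2*(j:ℤ))+2) ≤ (m:ℝ) := by
            rw [hvP] at hp; linarith
          have hodd : Odd (-(2*(j:ℤ))+1) := ⟨-(j:ℤ), by ring⟩
          have h2 : vQ E = -(g ^ (2*(j:ℤ)-1)) + vQ (E.erase (-(2*(j:ℤ))+1)) := by
            rw [vQ_erase hbot, gc_zpow_odd hodd, show -(-(2*(j:ℤ))+1) = 2*(j:ℤ)-1 by ring]
            ring
          have heet : ∀ i ∈ E.erase (-(2*(j:ℤ))+1), Even i → -(2*(j:ℤ))+4 ≤ i := by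
            intro i hi hei
            have := erase_lb hNA hbot hminE i hi
            rcases hei with ⟨s, hs⟩; omega
          have h4 : vQ (E.erase (-(2*(j:ℤ))+1)) < g ^ (1-(-(2*(j:ℤ))+4)) :=
            vQ_le_even _ (hNA.mono (Finset.erase_subset _ _)) _ heet
          have h5 : g ^ (1-(-(2*(j:ℤ))+4)) = g ^ (2*(j:ℤ)-3) := by
            rw [show (1:ℤ)-(-(2*(j:ℤ))+4) = 2*(j:ℤ)-3 by ring]
          have h6 : g ^ (2*(j:ℤ)-1) = g ^ (2*(j:ℤ)-2) + g ^ (2*(j:ℤ)-3) := by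
            have := gz_step (2*(j:ℤ)-3)
            rw [show 2*(j:ℤ)-3+2 = 2*(j:ℤ)-1 by ring, show 2*(j:ℤ)-3+1 = 2*(j:ℤ)-2 by ring] at this
            exact this
          have h7 : g ^ (2*(j:ℤ)) = g ^ (2*(j:ℤ)-1) + g ^ (2*(j:ℤ)-2) := by
            have := gz_step (2*(j:ℤ)-2)
            rw [show 2*(j:ℤ)-2+2 = 2*(j:ℤ) by ring, show 2*(j:ℤ)-2+1 = 2*(j:ℤ)-1 by ring] at this
            exact this
          rw [h5] at h4
          rw [hQ] at h2
          -- m - g^{2j} < -g^{2j-1} + g^{2j-3} = -g^{2j-2} : m < g^{2j-1}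
          -- but m ≥ g^{2j-1} + g^{-2j+2} > g^{2j-1}
          have hpos := gzpow_pos (-(2*(j:ℤ))+2)
          linarith
        set E2 := E.erase (-(2*(j:ℤ))+1) with hE2
        have hNA2 : NA E2 := hNA.mono (Finset.erase_subset _ _)
        have hcard2 : E2.card + 1 = E.card := by
          rw [hE2, Finset.card_erase_of_mem hbot]; omega
        have hvP2 : vP E2 = (m:ℝ) - g ^ (-(2*(j:ℤ))+2) := by
          rw [hE2, vP_erase hbot, hvP]
          have hstep : g ^ (-(2*(j:ℤ))+2) = g ^ (-(2*(j:ℤ))+1) + g ^ (-(2*(j:ℤ))) := gz_step _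
          linarith
        rcases Nat.eq_or_lt_of_le hj1 with hj1' | hj2
        · -- j = 1
          have hj1'' : j = 1 := hj1'.symm
          subst hj1''
          have hvP2' : vP E2 = ((m-1:ℕ):ℝ) := by
            rw [hvP2]
            rw [Nat.cast_sub hm1]
            norm_num
          have hz := (ihN E2 (by omega) hNA2).1 (m-1) hvP2'
          have hzm : z m ≤ z (m-1) + 1 := by
            have h1 := Z1 (m-1) 2
            rw [fib_two] at h1
            rw [show m-1+1 = m by omega] at h1
            exact h1
          have hb : ¬ (m < fib (2*1-1)) := by
            rw [show 2*1-1 = 1 by omega, fib_one]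
            omega
          rw [if_neg hb]
          omega
        · -- j ≥ 2
          have hj2' : 2 ≤ j := hj2
          have hcastj : ((j-1:ℕ):ℤ) = (j:ℤ)-1 := by
            push_cast [Nat.cast_sub (by omega : 1 ≤ j)]
            ring
          by_cases htop2 : (2*(j:ℤ)-2) ∈ E
          · -- (a-ii)
            have htop2' : (2*(j:ℤ)-2) ∈ E2 :=
              Finset.mem_erase.mpr ⟨by omega, htop2⟩
            set E3 := E2.erase (2*(j:ℤ)-2) with hE3
            have hNA3 : NA E3 := hNA2.mono (Finset.erase_subset _ _)
            have hcard3 : E3.card + 1 = E2.card := by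
              have hpos : 0 < E2.card := Finset.card_pos.mpr ⟨_, htop2'⟩
              rw [hE3, Finset.card_erase_of_mem htop2']
              omega
            set L2 : ℕ := fib (2*j-1) + fib (2*j-3) with hL2
            have hLuc2 : g ^ (2*(j:ℤ)-2) + g ^ (-(2*(j:ℤ))+2) = (L2:ℝ) := by
              have := Luceven (k := j-1) (by omega)
              rw [show -(2*((j-1:ℕ):ℤ)) = -(2*(j:ℤ))+2 by rw [hcastj]; ring,
                  show 2*((j-1:ℕ):ℤ) = 2*(j:ℤ)-2 by rw [hcastj]; ring,
                  show 2*(j-1)+1 = 2*j-1 by omega, show 2*(j-1)-1 = 2*j-3 by omega] at this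
              rw [this, hL2]
              push_cast
              ring
            have hmge2 : L2 ≤ m := by
              have h1 : g ^ (2*(j:ℤ)-2) ≤ vP E2 := single_le_vP htop2'
              rw [hvP2] at h1
              have h2 : (L2:ℝ) ≤ (m:ℝ) := by linarith [hLuc2]
              exact_mod_cast h2
            set m3 : ℕ := m - L2 with hm3
            have hvP3 : vP E3 = (m3:ℝ) := by
              rw [hE3, vP_erase htop2', hvP2, hm3, Nat.cast_sub hmge2]
              linarith [hLuc2]
            have hz3 := (ihN E3 (by omega) hNA3).1 m3 hvP3
            have hzm : z m ≤ z m3 + 2 := by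
              have he : m = m3 + fib (2*j-1) + fib (2*j-3) := by omega
              rw [he]; exact Z2 _ _ _
            have hb : ¬ (m < fib (2*j-1)) := by omega
            rw [if_neg hb]
            omega
          · -- (a-i)
            have hwin2 : ∀ i ∈ E2, -(2*((j-1:ℕ):ℤ)) ≤ i ∧ i ≤ 2*((j-1:ℕ):ℤ)-1 := by
              intro i hi
              have hiE : i ∈ E := Finset.mem_of_mem_erase hi
              have h1 := erase_lb hNA hbot hminE i (by rwa [← hE2])
              have h2 := (hwin i hiE).2
              have h3 : i ≠ 2*(j:ℤ)-1 := fun h => htopnot (h ▸ hiE)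
              have h4 : i ≠ 2*(j:ℤ)-2 := fun h => htop2 (h ▸ hiE)
              rw [hcastj]
              omega
            have hvP2' : vP E2 = (m:ℝ) - g ^ (-(2*((j-1:ℕ):ℤ))) := by
              rw [hvP2, show -(2*((j-1:ℕ):ℤ)) = -(2*(j:ℤ))+2 by rw [hcastj]; ring]
            have hA := (ihN E2 (by omega) hNA2).2 m (j-1) hm1 (by omega) hwin2 hvP2'
            have : z m ≤ E2.card := by omega
            have hsplit : (if m < fib (2*j-1) then 1 else 0) ≤ 1 := by
              split <;> omega
            omega
      · -- CASE (b)
        have hminE3 : ∀ i ∈ E, -(2*(j:ℤ))+2 ≤ i := by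
          intro i hi
          have h1 := (hwin i hi).1
          have h2 : i ≠ -(2*(j:ℤ)) := fun h => h2jnot (h ▸ hi)
          have h3 : i ≠ -(2*(j:ℤ))+1 := fun h => hbot (h ▸ hi)
          omega
        set L' : ℕ := fib (2*j) + fib (2*j-2) with hL'
        have hLucodd : g ^ (2*(j:ℤ)-1) = (L':ℝ) + g ^ (-(2*(j:ℤ))+1) := by
          have := Lucodd (j-1)
          rw [show -(2*((j-1:ℕ):ℤ)+1) = -(2*(j:ℤ))+1 by
            rw [Nat.cast_sub (by omega : 1 ≤ j)]; push_cast; ring,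
            show 2*((j-1:ℕ):ℤ)+1 = 2*(j:ℤ)-1 by
            rw [Nat.cast_sub (by omega : 1 ≤ j)]; push_cast; ring,
            show 2*(j-1)+2 = 2*j by omega, show 2*(j-1) = 2*j-2 by omega] at this
          rw [this, hL']
          push_cast
          ring
        have hsteplow : g ^ (-(2*(j:ℤ))+2) = g ^ (-(2*(j:ℤ))+1) + g ^ (-(2*(j:ℤ))) := gz_step _
        have htopb : 2*(j:ℤ)-1 ∈ E := by
          by_contra htop
          have htub : ∀ i ∈ E, i ≤ 2*(j:ℤ)-2 := by
            intro i hi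
            have h1 := (hwin i hi).2
            have h2 : i ≠ 2*(j:ℤ)-1 := fun h => htop (h ▸ hi)
            omega
          have hoddlb : ∀ i ∈ E, Odd i → -(2*(j:ℤ))+3 ≤ i := by
            intro i hi hoi
            have := hminE3 i hi
            rcases hoi with ⟨s, hs⟩; omega
          have h1 : -(g ^ (1-(-(2*(j:ℤ))+3))) < vQ E := vQ_ge_odd E hNA _ hoddlb
          rw [show (1:ℤ)-(-(2*(j:ℤ))+3) = 2*(j:ℤ)-2 by ring, hQ] at h1
          -- m > g^{2j} - g^{2j-2} = g^{2j-1} = L' + g^{-2j+1} hence m ≥ L'+1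
          have h7 : g ^ (2*(j:ℤ)) = g ^ (2*(j:ℤ)-1) + g ^ (2*(j:ℤ)-2) := by
            have := gz_step (2*(j:ℤ)-2)
            rw [show 2*(j:ℤ)-2+2 = 2*(j:ℤ) by ring, show 2*(j:ℤ)-2+1 = 2*(j:ℤ)-1 by ring] at this
            exact this
          have hmlb : (L':ℝ) < (m:ℝ) := by
            have := gzpow_pos (-(2*(j:ℤ))+1)
            linarith [hLucodd]
          have hmlb' : L' + 1 ≤ m := by
            have : L' < m := by exact_mod_cast hmlb
            omega
          -- upper: vP < g^{2j-1} so m < L' + g^{-2j+2} ≤ L' + 1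
          have hup : vP E < g ^ (2*(j:ℤ)-1) := by
            have h8 := S1 E hNA (2*(j:ℤ)-2) htub
            rw [show 2*(j:ℤ)-2+1 = 2*(j:ℤ)-1 by ring] at h8
            exact h8
          rw [hvP] at hup
          have h9 : g ^ (-(2*(j:ℤ))+2) ≤ 1 := by
            have := gzpow_le (a := -(2*(j:ℤ))+2) (b := 0) (by omega)
            rwa [zpow_zero] at this
          have h10 : (m:ℝ) < (L':ℝ) + 1 := by linarith [hLucodd]
          have : (m:ℝ) ≥ (L':ℝ) + 1 := by exact_mod_cast hmlb'
          linarith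
        -- m ≥ L' + 1
        have hmge : L' + 1 ≤ m := by
          have h1 : g ^ (2*(j:ℤ)-1) ≤ vP E := single_le_vP htopb
          rw [hvP] at h1
          have h2 : (L':ℝ) < (m:ℝ) := by
            have p1 := gzpow_pos (-(2*(j:ℤ))+1)
            have p2 := gzpow_pos (-(2*(j:ℤ)))
            linarith [hLucodd]
          have : L' < m := by exact_mod_cast h2
          omega
        have hfibL : fib (2*j-1) ≤ L' := by
          have : fib (2*j-1) ≤ fib (2*j) := fib_mono (by omega)
          omega
        have hb : ¬ (m < fib (2*j-1)) := by omega
        rw [if_neg hb]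
        set E2 := E.erase (2*(j:ℤ)-1) with hE2
        have hNA2 : NA E2 := hNA.mono (Finset.erase_subset _ _)
        have hcard2 : E2.card + 1 = E.card := by
          rw [hE2, Finset.card_erase_of_mem htopb]; omega
        set m' : ℕ := m - L' with hm'
        have hm'1 : 1 ≤ m' := by omega
        have hvP2 : vP E2 = (m':ℝ) - g ^ (-(2*(j:ℤ))+2) := by
          rw [hE2, vP_erase htopb, hvP, hm', Nat.cast_sub (by omega : L' ≤ m)]
          linarith [hLucodd, hsteplow]
        rcases Nat.eq_or_lt_of_le hj1 with hj1' | hj2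
        · -- j = 1
          have hj1'' : j = 1 := hj1'.symm
          subst hj1''
          have hvP2' : vP E2 = ((m'-1:ℕ):ℝ) := by
            rw [hvP2, Nat.cast_sub hm'1]
            norm_num
          have hz := (ihN E2 (by omega) hNA2).1 (m'-1) hvP2'
          -- m = m' + 1 = (m'-1) + fib 3
          have hzm : z m ≤ z (m'-1) + 1 := by
            have h1 := Z1 (m'-1) 3
            have hL'1 : L' = 1 := by rw [hL']; rfl
            have he : m'-1 + fib 3 = m := by
              have : fib 3 = 2 := rfl
              omega
            rw [he] at h1
            exact h1
          omega
        · -- j ≥ 2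
          have hj2' : 2 ≤ j := hj2
          have hcastj : ((j-1:ℕ):ℤ) = (j:ℤ)-1 := by
            push_cast [Nat.cast_sub (by omega : 1 ≤ j)]
            ring
          have hbot2 : -(2*(j:ℤ))+2 ∉ E := by
            intro hmem
            have hbig := vQ_bottom_lower hNA hmem hminE3 ⟨-(j:ℤ)+1, by ring⟩
            rw [show -(-(2*(j:ℤ))+2)-1 = 2*(j:ℤ)-3 by ring, hQ] at hbig
            -- vQ = m - g^{2j} < g^{-2j} ≤ g^{2j-3}
            have h1 : g ^ (-(2*(j:ℤ))) < g ^ (2*(j:ℤ)-3) := gzpow_lt (by omega)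
            linarith
          have hwin2 : ∀ i ∈ E2, -(2*((j-1:ℕ):ℤ)) ≤ i ∧ i ≤ 2*((j-1:ℕ):ℤ)-1 := by
            intro i hi
            have hiE : i ∈ E := Finset.mem_of_mem_erase hi
            have h1 := hminE3 i hiE
            have h2 := (hwin i hiE).2
            have h3 : i ≠ 2*(j:ℤ)-1 := Finset.ne_of_mem_erase hi
            have h4 : i ≠ 2*(j:ℤ)-2 := by
              intro h
              exact hNA (2*(j:ℤ)-2) (h ▸ hiE) (by rwa [show 2*(j:ℤ)-2+1 = 2*(j:ℤ)-1 by ring])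
            have h5 : i ≠ -(2*(j:ℤ))+2 := fun h => hbot2 (h ▸ hiE)
            rw [hcastj]
            omega
          have hvP2' : vP E2 = (m':ℝ) - g ^ (-(2*((j-1:ℕ):ℤ))) := by
            rw [hvP2, show -(2*((j-1:ℕ):ℤ)) = -(2*(j:ℤ))+2 by rw [hcastj]; ring]
          have hA := (ihN E2 (by omega) hNA2).2 m' (j-1) hm'1 (by omega) hwin2 hvP2'
          have hmm : m = m' + fib (2*j) + fib (2*j-2) := by omega
          by_cases hsm : m' < fib (2*(j-1)-1)
          · -- small : bonus at lower level
            rw [if_pos hsm] at hA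
            have hzm : z m ≤ z m' + 2 := by rw [hmm]; exact Z2 _ _ _
            omega
          · -- big : H lemma
            rw [if_neg hsm] at hA
            have hsm' : fib (2*j-3) ≤ m' := by
              rw [show 2*(j-1)-1 = 2*j-3 by omega] at hsm
              omega
            -- m' < fib (2j)
            have hmlt : m < fib (2*j+1) + fib (2*j-1) := by
              have h1 : (m:ℝ) < (fib (2*j+1) + fib (2*j-1) : ℕ) := by
                have h2 := Luceven (k := j) hj1
                push_cast
                push_cast at h2
                linarith [hmub, h2]
              exact_mod_cast h1
            have hm'lt : m' < fib (2*j) := by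
              have e1 : fib (2*j+1) = fib (2*j) + fib (2*j-1) := by
                have := fib3 (2*j-1)
                rw [show 2*j-1+2 = 2*j+1 by omega, show 2*j-1+1 = 2*j by omega] at this
                omega
              have e2 : fib (2*j) = fib (2*j-1) + fib (2*j-2) := by
                have := fib3 (2*j-2)
                rw [show 2*j-2+2 = 2*j by omega, show 2*j-2+1 = 2*j-1 by omega] at this
                omega
              have e3 : fib (2*j-1) = fib (2*j-2) + fib (2*j-3) := by
                have := fib3 (2*j-3)
                rw [show 2*j-3+2 = 2*j-1 by omega, show 2*j-3+1 = 2*j-2 by omega] at this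
                omega
              have e4 : fib (2*j-3) ≤ fib (2*j-2) := fib_mono (by omega)
              omega
            have hH : z m ≤ z m' + 1 := by
              rw [hmm]
              exact Hlem hj2' hsm' hm'lt
            omega


-- GLUE
lemma sort_map_sum (S : Finset ℕ) (f : ℕ → ℕ) :
    ((S.sort (·≤·)).map f).sum = ∑ i ∈ S, f i := by
  rw [← Finset.sum_map_toList]
  exact List.Perm.sum_eq (List.Perm.map f (Finset.sort_perm_toList S (·≤·)))

lemma chain_strengthen (P : ℕ → Prop) (hP : ∀ a, P a → P (a+1) → False) :
    ∀ L : List ℕ, L.Chain' (· < ·) → (∀ a ∈ L, P a) →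
      L.Chain' (fun a b => a + 2 ≤ b) := by
  intro L
  induction L with
  | nil => intros; exact List.isChain_nil
  | cons x L ih =>
    intro hc hm
    rcases L with _ | ⟨y, L'⟩
    · exact List.isChain_singleton x
    · unfold List.Chain' at hc ⊢; rw [List.isChain_cons_cons] at hc ⊢
      refine ⟨?_, ih hc.2 (fun a ha => hm a (List.mem_cons_of_mem _ ha))⟩
      have hxy : x < y := hc.1
      by_contra hcon
      have hyx : y = x + 1 := by omega
      exact hP x (hm x (by simp)) (hyx ▸ hm y (by simp))

lemma z_eq_of_rep (S : Finset ℕ) (hNA : ∀ i, ¬(i ∈ S ∧ i+1 ∈ S))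
    (n : ℕ) (hn : n = ∑ i ∈ S, fib (i+2)) : z n = S.card := by
  classical
  set l : List ℕ := ((S.sort (·≤·)).map (·+2)).reverse with hl
  have hsum : (l.map fib).sum = n := by
    rw [hl, List.map_reverse, List.sum_reverse, List.map_map]
    rw [hn]
    exact sort_map_sum S (fun i => fib (i+2))
  have hchain0 : List.Chain' (fun a b => a + 2 ≤ b) (S.sort (·≤·)) := by
    apply chain_strengthen (fun a => a ∈ S) (fun a ha ha1 => hNA a ⟨ha, ha1⟩)
    · exact List.isChain_iff_pairwise.mpr (List.sortedLT_iff_pairwise.mp (Finset.sortedLT_sort S))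
    · intro a ha
      exact (Finset.mem_sort _).mp ha
  have hrep : l.IsZeckendorfRep := by
    rw [List.IsZeckendorfRep, List.isChain_append]
    refine ⟨?_, List.isChain_singleton 0, ?_⟩
    · rw [hl, List.isChain_reverse]
      have : List.Chain' (fun a b => a + 2 ≤ b) ((S.sort (·≤·)).map (·+2)) := by
        unfold List.Chain'; rw [List.isChain_map]
        exact hchain0.imp (fun a b h => by omega)
      exact this.imp (fun a b h => by omega)
    · intro x hx y hy
      simp only [List.head?_cons, Option.mem_some_iff] at hy
      subst hy
      have hxl : x ∈ l := List.mem_of_mem_getLast? hx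
      rw [hl, List.mem_reverse, List.mem_map] at hxl
      obtain ⟨i, _, rfl⟩ := hxl
      omega
  have hZ := Nat.zeckendorf_sum_fib hrep
  rw [hsum] at hZ
  rw [z, hZ, hl]
  simp [Finset.length_sort]

end Gerd

/-- Gerdemann's conjecture: the digit sum of the Zeckendorf representation of `n` is at
most the digit sum of the canonical base-φ representation of `n`. Here `d n` denotes
the canonical φ-representation of `n`. -/
theorem zeckendorf_digit_sum_le_phi_digit_sum
    (d : ℕ → ℤ →₀ ℕ) (hd : ∀ n : ℕ, IsCanonRep n (d n))
    (n : ℕ) (b : ℕ →₀ ℕ) (hb1 : ∀ i, b i ≤ 1) (hb2 : ∀ i, b i * b (i + 1) = 0)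
    (hn : n = ∑ i ∈ b.support, b i * Nat.fib (i + 2)) :
    ∑ i ∈ b.support, b i ≤ ∑ i ∈ (d n).support, d n i := by
  classical
  obtain ⟨⟨hle, hsum⟩, hadj⟩ := hd n
  set E := (d n).support with hE
  have hd1 : ∀ i ∈ E, d n i = 1 := by
    intro i hi
    have h1 := hle i
    have h2 : d n i ≠ 0 := Finsupp.mem_support_iff.mp hi
    omega
  have hNA : Gerd.NA E := by
    intro i hi hi1
    have hz := hadj i
    rw [hd1 i hi, hd1 (i+1) hi1] at hz
    norm_num at hz
  have hvP : Gerd.vP E = (n:ℝ) := by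
    unfold Gerd.vP
    calc ∑ i ∈ E, Real.goldenRatio ^ i = ∑ i ∈ E, ((d n i : ℝ)) * phi ^ i := by
          apply Finset.sum_congr rfl
          intro i hi
          rw [hd1 i hi, Gerd.phi_eq]
          norm_num
      _ = (n:ℝ) := hsum.symm
  have hMain := (Gerd.key E.card E le_rfl hNA).1 n hvP
  have hRHS : ∑ i ∈ E, d n i = E.card := by
    rw [Finset.card_eq_sum_ones]
    exact Finset.sum_congr rfl hd1
  set S := b.support with hS
  have hbS : ∀ i ∈ S, b i = 1 := by
    intro i hi
    have h1 := hb1 i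
    have h2 : b i ≠ 0 := Finsupp.mem_support_iff.mp hi
    omega
  have hLHS : ∑ i ∈ S, b i = S.card := by
    rw [Finset.card_eq_sum_ones]
    exact Finset.sum_congr rfl hbS
  have hNAb : ∀ i, ¬(i ∈ S ∧ i+1 ∈ S) := by
    rintro i ⟨h1, h2⟩
    have hz := hb2 i
    rw [hbS i h1, hbS (i+1) h2] at hz
    norm_num at hz
  have hzn : Gerd.z n = S.card := by
    apply Gerd.z_eq_of_rep S hNAb n
    rw [hn]
    apply Finset.sum_congr rfl
    intro i hi
    rw [hbS i hi, one_mul]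
  rw [hLHS, hRHS, ← hzn]
  exact hMain
end
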